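/- arXiv:1605.00488 — 6 statements merged into one kernel-verified Lean document; each statement's English description precedes it below -/
import Mathlib

section
/- There is no complex polynomial g and constant c ∈ ℂ such that λ^n + a₁(λ)e^{−λ} + ⋯ + a_k(λ)e^{−kλ} = g(λ)e^{cλ} for all λ ∈ ℂ, whenever n, k ≥ 1 and a_k is a nonzero polynomial. -/
open Filter Polynomial Topology

lemma L1 (p : Polynomial ℂ) {c : ℂ} (hc : c.re < 0) :
    Tendsto (fun t : ℝ => p.eval (t : ℂ) * Complex.exp (c * t)) atTop (𝓝 0) := by
  induction p using Polynomial.induction_on' with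
  | add p q hp hq => simpa [add_mul] using hp.add hq
  | monomial m b =>
    rw [tendsto_zero_iff_norm_tendsto_zero]
    have hs : (0:ℝ) < -c.re := by linarith
    have key : Tendsto (fun t : ℝ => ‖b‖ * (t ^ m * Real.exp (c.re * t))) atTop (𝓝 0) := by
      have h1 : Tendsto (fun x : ℝ => x ^ m * Real.exp (-x)) atTop (𝓝 0) :=
        Real.tendsto_pow_mul_exp_neg_atTop_nhds_zero m
      have h2 : Tendsto (fun t : ℝ => (-c.re) * t) atTop atTop :=
        Tendsto.const_mul_atTop hs tendsto_id
      have h3 := (h1.comp h2).const_mul (‖b‖ * ((-c.re) ^ m)⁻¹)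
      rw [mul_zero] at h3
      apply h3.congr
      intro t
      have hne : ((-c.re) ^ m : ℝ) ≠ 0 := pow_ne_zero _ (ne_of_gt hs)
      field_simp [Function.comp, mul_pow]
      ring_nf
      simp only [Function.comp_apply, neg_neg]
      ring
    apply Tendsto.congr' _ key
    filter_upwards [eventually_ge_atTop (0:ℝ)] with t ht
    rw [eval_monomial]
    rw [norm_mul, norm_mul, show ‖Complex.exp (c*t)‖ = Real.exp ((c*(t:ℂ)).re) from by rw [Complex.norm_exp]]
    have : ((c * t).re) = c.re * t := by simp [Complex.mul_re]
    rw [this, norm_pow, Complex.norm_real, Real.norm_eq_abs, abs_of_nonneg ht]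
    ring

lemma L1' (p : Polynomial ℂ) {c : ℂ} (hc : c.re < 0) :
    Tendsto (fun t : ℝ => p.eval (-(t : ℂ)) * Complex.exp (c * t)) atTop (𝓝 0) := by
  apply (L1 (p.comp (-X)) hc).congr
  intro t
  simp [eval_comp]

lemma L2 (p : Polynomial ℂ) (hp : Tendsto (fun t : ℝ => p.eval (t : ℂ)) atTop (𝓝 0)) :
    p = 0 := by
  by_contra h0
  rcases le_or_gt p.degree 0 with hd | hd
  · have hC : p = C (p.coeff 0) := (eq_C_of_degree_le_zero hd)
    have : Tendsto (fun _ : ℝ => p.coeff 0) atTop (𝓝 0) := by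
      apply hp.congr; intro t; rw [hC]; simp
    have h00 : p.coeff 0 = 0 := (tendsto_nhds_unique this tendsto_const_nhds).symm
    exact h0 (by rw [hC, h00, map_zero])
  · have := Polynomial.tendsto_norm_atTop p hd (z := fun t : ℝ => (t : ℂ)) (l := atTop)
      (by simpa using tendsto_abs_atTop_atTop)
    exact not_tendsto_nhds_of_tendsto_atTop this 0 (by simpa using hp.norm)

theorem stmt_4 (n k : ℕ) (hn : 1 ≤ n) (hk1 : 1 ≤ k) (hkn : k ≤ n)
    (a : Fin k → Polynomial ℂ) (hak : a ⟨k - 1, by omega⟩ ≠ 0) :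
    ¬ ∃ (g : Polynomial ℂ) (c : ℂ), ∀ lam : ℂ,
      lam ^ n + ∑ j : Fin k, (a j).eval lam * Complex.exp (-(((j : ℕ) : ℂ) + 1) * lam)
        = g.eval lam * Complex.exp (c * lam) := by
  rintro ⟨g, c, h⟩
  rcases lt_or_ge c.re 0 with hc | hc
  · -- Case Re c < 0 : evaluate at λ = t → +∞, everything on the other side tends to 0.
    have hsum : Tendsto (fun t : ℝ =>
        ∑ j : Fin k, (a j).eval (t:ℂ) * Complex.exp (-(((j : ℕ) : ℂ) + 1) * t))
        atTop (𝓝 0) := by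
      have := tendsto_finset_sum (Finset.univ : Finset (Fin k)) (fun j _ =>
        L1 (a j) (c := -(((j : ℕ) : ℂ) + 1)) (by
          simp only [Complex.neg_re, Complex.add_re, Complex.natCast_re, Complex.one_re]
          have : (0:ℝ) ≤ (j:ℕ) := Nat.cast_nonneg _
          linarith))
      simpa using this
    have h1 : Tendsto (fun t : ℝ => ((t:ℂ)) ^ n) atTop (𝓝 0) := by
      have := (L1 g hc).sub hsum
      rw [sub_zero] at this
      apply this.congr
      intro t
      linear_combination (-1 : ℂ) * h (t:ℂ)
    have h2 : Tendsto (fun t : ℝ => ‖((t:ℂ)) ^ n‖) atTop atTop := by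
      have : Tendsto (fun t : ℝ => |t| ^ n) atTop atTop :=
        (tendsto_pow_atTop (by omega)).comp tendsto_abs_atTop_atTop
      apply this.congr
      intro t
      simp [Complex.norm_real, Real.norm_eq_abs]
    exact not_tendsto_nhds_of_tendsto_atTop h2 0 (by simpa using h1.norm)
  · -- Case Re c ≥ 0 : evaluate at λ = -t, multiply by e^{-kt}; a_{k-1}(-t) → 0.
    set i : Fin k := ⟨k - 1, by omega⟩ with hi
    set S : Fin k → ℝ → ℂ := fun j t =>
      (a j).eval (-(t:ℂ)) * Complex.exp (-(((j : ℕ) : ℂ) + 1) * -(t:ℂ)) *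
        Complex.exp (-(k:ℂ) * t) with hS
    clear_value S
    have hki : ((i : ℕ) : ℂ) + 1 = (k : ℂ) := by
      rw [hi]
      simp only [Nat.cast_sub hk1]
      push_cast
      ring
    -- the term j = i is just a_{k-1}(-t)
    have hSi : ∀ t : ℝ, S i t = (a i).eval (-(t:ℂ)) := by
      intro t
      simp only [hS]
      rw [mul_assoc, ← Complex.exp_add, hki,
        show -(k:ℂ) * -(t:ℂ) + -(k:ℂ) * t = 0 by ring, Complex.exp_zero, mul_one]
    -- terms j ≠ i tend to 0
    have hSj : ∀ j : Fin k, j ≠ i → Tendsto (S j) atTop (𝓝 0) := by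
      intro j hj
      have hjk : (j : ℕ) + 1 < k := by
        have := j.isLt
        have : (j : ℕ) ≠ k - 1 := fun hh => hj (Fin.ext hh)
        omega
      have hre : ((((j : ℕ) : ℂ) + 1 - (k : ℂ))).re < 0 := by
        simp only [Complex.sub_re, Complex.add_re, Complex.natCast_re, Complex.one_re]
        have h1 : ((j:ℕ) : ℝ) + 1 < (k : ℝ) := by exact_mod_cast hjk
        linarith
      apply (L1' (a j) hre).congr
      intro t
      simp only [hS]
      rw [mul_assoc, ← Complex.exp_add,
        show ((((j:ℕ):ℂ) + 1 - (k:ℂ)) * (t:ℂ))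
          = -(((j:ℕ):ℂ)+1) * -(t:ℂ) + -(k:ℂ) * (t:ℂ) from by ring]
    -- the full sum tends to 0
    have hsum : Tendsto (fun t : ℝ => ∑ j : Fin k, S j t) atTop (𝓝 0) := by
      have hg : Tendsto (fun t : ℝ => g.eval (-(t:ℂ)) * Complex.exp ((-c - (k:ℂ)) * t))
          atTop (𝓝 0) := L1' g (by
            simp only [Complex.sub_re, Complex.neg_re, Complex.natCast_re]
            have : (1:ℝ) ≤ (k:ℝ) := by exact_mod_cast hk1
            linarith)
      have hx : Tendsto (fun t : ℝ => ((X : Polynomial ℂ) ^ n).eval (-(t:ℂ)) *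
          Complex.exp (-(k:ℂ) * t)) atTop (𝓝 0) := L1' (X ^ n) (by
            simp only [Complex.neg_re, Complex.natCast_re]
            have : (1:ℝ) ≤ (k:ℝ) := by exact_mod_cast hk1
            linarith)
      have := hg.sub hx
      rw [sub_zero] at this
      apply this.congr
      intro t
      simp only [hS, eval_pow, eval_X]
      rw [← Finset.sum_mul]
      have hgsplit : Complex.exp ((-c - (k:ℂ)) * t)
          = Complex.exp (c * -(t:ℂ)) * Complex.exp (-(k:ℂ) * t) := by
        rw [← Complex.exp_add]; congr 1; ring
      rw [hgsplit]
      linear_combination (-(Complex.exp (-(k:ℂ) * (t:ℂ)))) * (h (-(t:ℂ)))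
    -- hence S i → 0
    have herase : Tendsto (fun t : ℝ => ∑ j ∈ Finset.univ.erase i, S j t) atTop (𝓝 0) := by
      have := tendsto_finset_sum (Finset.univ.erase i)
        (fun j (hj : j ∈ Finset.univ.erase i) => hSj j (Finset.ne_of_mem_erase hj))
      simpa using this
    have hStop : Tendsto (fun t : ℝ => S i t) atTop (𝓝 0) := by
      have := hsum.sub herase
      rw [sub_zero] at this
      apply this.congr
      intro t
      rw [← Finset.add_sum_erase Finset.univ (fun j => S j t) (Finset.mem_univ i)]
      ring
    -- so a_{k-1} composed with -X tends to 0, hence is 0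
    have hcomp : ((a i).comp (-X)) = 0 := by
      apply L2
      apply (hStop.congr ?_)
      intro t
      rw [hSi t, eval_comp]
      simp
    have : a i = 0 := by
      have hb : a i = ((a i).comp (-X)).comp (-X) := by
        rw [comp_assoc, neg_comp, X_comp, neg_neg, comp_X]
      rw [hb, hcomp, zero_comp]
    exact hak this
end

section
/- An entire function of order at most 1 with at most finitely many zeros has the form f(λ) = g(λ)e^{cλ} for some complex polynomial g and some c ∈ ℂ. -/
open Complex Set Metric Function Filter intervalIntegral MeasureTheory

lemma entire_dslope {f : ℂ → ℂ} (hf : Differentiable ℂ f) (a : ℂ) :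
    Differentiable ℂ (dslope f a) := by
  intro b
  rcases eq_or_ne b a with rfl | hne
  · obtain ⟨p, hp⟩ := hf.analyticAt b
    exact (HasFPowerSeriesAt.has_fpower_series_dslope_fslope hp).differentiableAt
  · exact (differentiableAt_dslope_of_ne hne).mpr (hf b)

lemma entire_iterate_dslope {f : ℂ → ℂ} (hf : Differentiable ℂ f) (a : ℂ) (m : ℕ) :
    Differentiable ℂ ((swap dslope a)^[m] f) := by
  induction m generalizing f with
  | zero => exact hf
  | succ n ih => rw [Function.iterate_succ_apply]; exact ih (entire_dslope hf a)

/-- Factor out a single zero completely. -/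
lemma factor_one_zero {f : ℂ → ℂ} (hf : Differentiable ℂ f) {z₀ : ℂ}
    (hne : ¬ ∀ᶠ z in nhds z₀, f z = 0) :
    ∃ (m : ℕ) (g : ℂ → ℂ), Differentiable ℂ g ∧ g z₀ ≠ 0 ∧
      ∀ z, f z = (z - z₀) ^ m * g z := by
  obtain ⟨p, hp⟩ := hf.analyticAt z₀
  have hp0 : p ≠ 0 := fun h => hne (hp.locally_zero_iff.mpr h)
  refine ⟨p.order, (swap dslope z₀)^[p.order] f,
      entire_iterate_dslope hf z₀ p.order, hp.iterate_dslope_fslope_ne_zero hp0, ?_⟩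
  have hev := hp.eq_pow_order_mul_iterate_dslope
  -- both sides entire, agree near z₀, use identity thm
  have h1 : AnalyticOnNhd ℂ f univ := fun z _ => hf.analyticAt z
  have h2 : AnalyticOnNhd ℂ (fun z => (z - z₀) ^ p.order *
      (swap dslope z₀)^[p.order] f z) univ := by
    intro z _
    exact ((analyticAt_id.sub analyticAt_const).pow _).mul
      ((entire_iterate_dslope hf z₀ p.order).analyticAt z)
  intro z
  have := h1.eqOn_of_preconnected_of_eventuallyEq h2 isPreconnected_univ (mem_univ z₀)
    (Filter.Eventually.of_forall fun w => by simpa [smul_eq_mul] using hev w)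
  exact this (mem_univ z)

lemma not_eventually_zero {f : ℂ → ℂ} (hf : Differentiable ℂ f)
    (hzeros : {z : ℂ | f z = 0}.Finite) (z₀ : ℂ) : ¬ ∀ᶠ z in nhds z₀, f z = 0 := by
  intro h
  have h1 : AnalyticOnNhd ℂ f univ := fun z _ => hf.analyticAt z
  have := h1.eqOn_zero_of_preconnected_of_eventuallyEq_zero isPreconnected_univ (mem_univ z₀) h
  have : {z : ℂ | f z = 0} = univ := eq_univ_of_forall fun z => this (mem_univ z)
  rw [this] at hzeros
  exact infinite_univ hzeros

/-- Part A: factor all zeros into a polynomial. -/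
lemma factor_zeros : ∀ (n : ℕ) (f : ℂ → ℂ), Differentiable ℂ f →
    ∀ (hz : {z : ℂ | f z = 0}.Finite), hz.toFinset.card ≤ n →
    ∃ (P : Polynomial ℂ) (h : ℂ → ℂ), Differentiable ℂ h ∧ (∀ z, h z ≠ 0) ∧
      ∀ z, f z = P.eval z * h z := by
  intro n
  induction n with
  | zero =>
    intro f hf hz hcard
    refine ⟨1, f, hf, fun z hz0 => ?_, fun z => by simp⟩
    have : z ∈ hz.toFinset := by simpa using hz0
    simp [Finset.card_eq_zero.mp (Nat.le_zero.mp hcard)] at this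
  | succ n ih =>
    intro f hf hz hcard
    rcases eq_or_ne ({z : ℂ | f z = 0}) ∅ with hempty | hne
    · refine ⟨1, f, hf, fun z hz0 => ?_, fun z => by simp⟩
      have : z ∈ ({z : ℂ | f z = 0} : Set ℂ) := hz0
      simp [hempty] at this
    · obtain ⟨z₀, hz₀⟩ := nonempty_iff_ne_empty.mpr hne
      obtain ⟨m, g, hg, hgz₀, hfg⟩ := factor_one_zero hf (not_eventually_zero hf hz z₀)
      have hgz : {z : ℂ | g z = 0} = {z : ℂ | f z = 0} \ {z₀} := by
        ext w
        simp only [mem_setOf_eq, mem_diff, mem_singleton_iff]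
        constructor
        · intro hw
          refine ⟨by rw [hfg w, hw, mul_zero], fun h => hgz₀ (h ▸ hw)⟩
        · rintro ⟨hw, hwne⟩
          have := hfg w
          rw [hw] at this
          rcases mul_eq_zero.mp this.symm with h | h
          · exact absurd (pow_eq_zero_iff'.mp h).1 (by simp [sub_eq_zero, hwne])
          · exact h
      have hgfin : {z : ℂ | g z = 0}.Finite := hgz ▸ hz.diff
      have hcard' : hgfin.toFinset.card ≤ n := by
        have h1 : hgfin.toFinset ⊆ hz.toFinset.erase z₀ := by
          intro w hw
          rw [Set.Finite.mem_toFinset, hgz] at hw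
          simp only [Finset.mem_erase, Set.Finite.mem_toFinset]
          exact ⟨hw.2, hw.1⟩
        have h2 := Finset.card_le_card h1
        have h3 : z₀ ∈ hz.toFinset := by simpa using hz₀
        have := Finset.card_erase_of_mem h3
        omega
      obtain ⟨Q, h, hh, hhne, hQ⟩ := ih g hg hgfin hcard'
      refine ⟨(Polynomial.X - Polynomial.C z₀) ^ m * Q, h, hh, hhne, fun z => ?_⟩
      rw [hfg z, hQ z]
      simp [mul_assoc]

/-- Every entire function has a primitive. -/
lemma exists_primitive {u : ℂ → ℂ} (hu : Differentiable ℂ u) :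
    ∃ g : ℂ → ℂ, g 0 = 0 ∧ ∀ z, HasDerivAt g (u z) z := by
  have huA : AnalyticOnNhd ℂ u univ := fun w _ => hu.analyticAt w
  have hu' : Differentiable ℂ (deriv u) := fun z =>
    (huA.deriv z (mem_univ z)).differentiableAt
  refine ⟨fun z => ∫ t in (0:ℝ)..1, z * u ((t : ℂ) * z), by simp, fun x₀ => ?_⟩
  obtain ⟨C, hC⟩ := (isCompact_closedBall (0:ℂ) (‖x₀‖ + 1)).exists_bound_of_continuousOn
    (hu.continuous.continuousOn)
  obtain ⟨C', hC'⟩ := (isCompact_closedBall (0:ℂ) (‖x₀‖ + 1)).exists_bound_of_continuousOn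
    (hu'.continuous.continuousOn)
  set F : ℂ → ℝ → ℂ := fun x t => x * u ((t : ℂ) * x) with hF
  set F' : ℂ → ℝ → ℂ := fun x t => u ((t : ℂ) * x) + (t : ℂ) * x * deriv u ((t : ℂ) * x) with hF'
  have hdiff : ∀ (t : ℝ) (x : ℂ), HasDerivAt (fun y => F y t) (F' x t) x := by
    intro t x
    have h0 : HasDerivAt (fun y : ℂ => u ((t : ℂ) * y)) (deriv u ((t:ℂ) * x) * (t:ℂ)) x := by
      have hin : HasDerivAt (fun y : ℂ => (t:ℂ) * y) ((t:ℂ) * 1) x := (hasDerivAt_id x).const_mul _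
      exact HasDerivAt.comp x (by simpa using (hu ((t:ℂ)*x)).hasDerivAt) (by simpa using hin)
    have := (hasDerivAt_id x).fun_mul h0
    refine this.congr_deriv ?_
    simp [hF']; ring
  have key := hasDerivAt_integral_of_dominated_loc_of_deriv_le (F := F) (F' := F')
    (x₀ := x₀) (bound := fun _ => C + (‖x₀‖ + 1) * C') (a := 0) (b := 1) (μ := volume)
    (ball_mem_nhds x₀ (by norm_num : (0:ℝ) < 1))
    ?_ ?_ ?_ ?_ ?_ ?_
  · have ftc : (∫ t in (0:ℝ)..1, F' x₀ t) = u x₀ := by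
      have h1 : ∀ t ∈ Set.uIcc (0:ℝ) 1, HasDerivAt (fun s : ℝ => (s : ℂ) * u ((s : ℂ) * x₀))
          (F' x₀ t) t := by
        intro t _
        have he : HasDerivAt (fun w : ℂ => w * u (w * x₀)) (F' x₀ t) ((t:ℝ) : ℂ) := by
          have h0 : HasDerivAt (fun w : ℂ => u (w * x₀)) (deriv u ((t:ℂ) * x₀) * x₀) (t:ℂ) := by
            have hin : HasDerivAt (fun w : ℂ => w * x₀) (1 * x₀) (t:ℂ) :=
              (hasDerivAt_id _).mul_const x₀
            exact HasDerivAt.comp _ (by simpa using (hu ((t:ℂ)*x₀)).hasDerivAt)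
              (by simpa using hin)
          have := (hasDerivAt_id ((t:ℝ):ℂ)).fun_mul h0
          refine this.congr_deriv ?_
          simp [hF']; ring
        exact he.comp_ofReal
      have h2 : IntervalIntegrable (F' x₀) volume 0 1 := by
        apply Continuous.intervalIntegrable
        have : Continuous (deriv u) := hu'.continuous
        have := hu.continuous
        fun_prop
      have := integral_eq_sub_of_hasDerivAt h1 h2
      simpa using this
    rw [← ftc]
    exact key.2
  · refine Filter.Eventually.of_forall fun x => Continuous.aestronglyMeasurable ?_
    have := hu.continuous
    fun_prop
  · exact Continuous.intervalIntegrable (by have := hu.continuous; fun_prop) _ _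
  · refine Continuous.aestronglyMeasurable ?_
    have : Continuous (deriv u) := hu'.continuous
    have := hu.continuous
    fun_prop
  · refine Filter.Eventually.of_forall fun t ht x hx => ?_
    have htI : 0 < t ∧ t ≤ 1 := by
      rcases Set.mem_uIoc.mp ht with h | h
      · exact ⟨h.1, h.2⟩
      · norm_num at h; linarith [h.1, h.2]
    have hxb : ‖x‖ ≤ ‖x₀‖ + 1 := by
      have h := mem_ball_iff_norm.mp hx
      calc ‖x‖ = ‖x₀ + (x - x₀)‖ := by ring_nf
        _ ≤ ‖x₀‖ + ‖x - x₀‖ := norm_add_le _ _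
        _ ≤ ‖x₀‖ + 1 := by linarith
    have htn : ‖(t:ℂ)‖ ≤ 1 := by
      rw [Complex.norm_real, Real.norm_eq_abs, abs_of_pos htI.1]; exact htI.2
    have htx : (t:ℂ) * x ∈ closedBall (0:ℂ) (‖x₀‖ + 1) := by
      simp only [mem_closedBall, dist_zero_right, norm_mul]
      calc ‖(t:ℂ)‖ * ‖x‖ ≤ 1 * (‖x₀‖ + 1) :=
            mul_le_mul htn hxb (norm_nonneg x) zero_le_one
        _ = ‖x₀‖ + 1 := one_mul _
    have hC'0 : 0 ≤ C' := le_trans (norm_nonneg _)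
      (hC' 0 (mem_closedBall_self (by positivity)))
    calc ‖F' x t‖ ≤ ‖u ((t:ℂ) * x)‖ + ‖(t : ℂ) * x * deriv u ((t : ℂ) * x)‖ := norm_add_le _ _
      _ ≤ C + (‖x₀‖ + 1) * C' := by
          gcongr
          · exact hC _ htx
          · rw [norm_mul, norm_mul]
            calc ‖(t:ℂ)‖ * ‖x‖ * ‖deriv u ((t:ℂ)*x)‖ ≤ 1 * (‖x₀‖+1) * C' := by
                  apply mul_le_mul _ (hC' _ htx) (norm_nonneg _) (by positivity)
                  exact mul_le_mul htn hxb (norm_nonneg x) zero_le_one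
              _ = (‖x₀‖ + 1) * C' := by ring
  · exact intervalIntegrable_const
  · exact Filter.Eventually.of_forall fun t _ x _ => hdiff t x

lemma exists_log {h : ℂ → ℂ} (hh : Differentiable ℂ h) (hne : ∀ z, h z ≠ 0) :
    ∃ G : ℂ → ℂ, Differentiable ℂ G ∧ ∀ z, h z = Complex.exp (G z) := by
  have hA : AnalyticOnNhd ℂ h univ := fun w _ => hh.analyticAt w
  have hd : Differentiable ℂ (deriv h) := fun z =>
    (hA.deriv z (mem_univ z)).differentiableAt
  have hu : Differentiable ℂ (fun z => deriv h z / h z) := hd.div hh hne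
  obtain ⟨g, hg0, hg⟩ := exists_primitive hu
  have hgd : Differentiable ℂ g := fun z => (hg z).differentiableAt
  have hφ : ∀ z, HasDerivAt (fun w => h w * Complex.exp (-g w)) 0 z := by
    intro z
    have h1 : HasDerivAt (fun w => Complex.exp (-g w))
        (Complex.exp (-g z) * -(deriv h z / h z)) z := by
      have := ((hg z).neg).cexp
      simpa using this
    have := (hh z).hasDerivAt.fun_mul h1
    refine this.congr_deriv ?_
    field_simp [hne z]
    ring
  have hconst : ∀ z, h z * Complex.exp (-g z) = h 0 := by
    intro z
    have := is_const_of_deriv_eq_zero (𝕜 := ℂ)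
      (fun w => ((hh w).mul ((hgd w).neg.cexp : DifferentiableAt ℂ _ w)))
      (fun w => (hφ w).deriv) z 0
    simpa [hg0] using this
  refine ⟨fun z => Complex.log (h 0) + g z, by fun_prop, fun z => ?_⟩
  rw [Complex.exp_add, Complex.exp_log (hne 0), ← hconst z]
  rw [mul_assoc, ← Complex.exp_add]
  simp

lemma borel_caratheodory {G : ℂ → ℂ} (hG : Differentiable ℂ G) {R A : ℝ} (hR : 0 < R)
    (hA : 0 < A) (hre : ∀ z ∈ ball (0:ℂ) R, (G z).re - (G 0).re < A) :
    ∀ z : ℂ, ‖z‖ ≤ R / 2 → ‖G z - G 0‖ ≤ 2 * A := by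
  set K : ℂ → ℂ := fun z => G z - G 0 with hK
  have hKd : Differentiable ℂ K := hG.sub_const _
  have hK0 : K 0 = 0 := sub_self _
  have hKre : ∀ z ∈ ball (0:ℂ) R, (K z).re < A := by
    intro z hz; simpa [hK, Complex.sub_re] using hre z hz
  have hden : ∀ z ∈ ball (0:ℂ) R, (2 * (A:ℂ) - K z) ≠ 0 := by
    intro z hz h0
    have : (2 * (A:ℂ) - K z).re = 0 := by rw [h0]; simp
    simp only [Complex.sub_re, Complex.mul_re, Complex.ofReal_re, Complex.ofReal_im] at this
    have := hKre z hz
    norm_num at *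
    linarith
  set w : ℂ → ℂ := fun z => K z / (2 * (A:ℂ) - K z) with hw
  have hwd : DifferentiableOn ℂ w (ball (0:ℂ) R) :=
    (hKd.differentiableOn).div ((differentiable_const _).differentiableOn.sub
      hKd.differentiableOn) hden
  have hw0 : w 0 = 0 := by simp [hw, hK0]
  have hmaps : MapsTo w (ball (0:ℂ) R) (ball (w 0) 1) := by
    intro z hz
    rw [hw0, mem_ball_zero_iff]
    have hd := hden z hz
    rw [hw]
    simp only
    rw [norm_div, div_lt_one (norm_pos_iff.mpr hd)]
    have h1 : ‖K z‖ ^ 2 < ‖2 * (A:ℂ) - K z‖ ^ 2 := by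
      simp only [Complex.sq_norm, Complex.normSq_apply, Complex.sub_re,
        Complex.sub_im, Complex.mul_re, Complex.mul_im, Complex.ofReal_re, Complex.ofReal_im]
      norm_num
      nlinarith [hKre z hz]
    nlinarith [norm_nonneg (K z), norm_nonneg (2 * (A:ℂ) - K z)]
  intro z hz
  have hzball : z ∈ ball (0:ℂ) R := by
    rw [mem_ball_zero_iff]; linarith [hz, hR]
  have hschwarz := Complex.dist_le_div_mul_dist_of_mapsTo_ball hwd (hmaps.mono_right ball_subset_closedBall) hzball
  rw [hw0] at hschwarz
  simp only [dist_zero_right] at hschwarz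
  have hwz : ‖w z‖ ≤ 1 / 2 := by
    calc ‖w z‖ ≤ 1 / R * ‖z‖ := hschwarz
      _ ≤ 1 / R * (R / 2) := by gcongr
      _ = 1 / 2 := by field_simp
  -- K (1 + w) = 2A w
  have hid : K z * (1 + w z) = 2 * (A:ℂ) * w z := by
    have hd := hden z hzball
    rw [hw]
    field_simp
    ring
  have h1w : (1:ℝ) / 2 ≤ ‖1 + w z‖ := by
    have h := norm_sub_norm_le (1:ℂ) (-(w z))
    simp only [sub_neg_eq_add, norm_one, norm_neg] at h
    linarith
  have : ‖K z‖ * (1/2) ≤ ‖K z‖ * ‖1 + w z‖ := by gcongr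
  have h2 : ‖K z‖ * ‖1 + w z‖ = 2 * A * ‖w z‖ := by
    rw [← norm_mul, hid, norm_mul, norm_mul]
    simp [abs_of_pos hA]
  calc ‖K z‖ = 2 * (‖K z‖ * (1/2)) := by ring
    _ ≤ 2 * (2 * A * ‖w z‖) := by linarith
    _ ≤ 2 * (2 * A * (1/2)) := by gcongr
    _ = 2 * A := by ring

lemma affine_of_growth {G : ℂ → ℂ} (hG : Differentiable ℂ G) {B C : ℝ}
    (hbound : ∀ z : ℂ, 1 ≤ ‖z‖ → ‖G z‖ ≤ C + B * ‖z‖ ^ ((3:ℝ)/2)) :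
    ∀ z, G z = G 0 + deriv G 0 * z := by
  set H : ℂ → ℂ := dslope (dslope G 0) 0 with hH
  have hHd : Differentiable ℂ H := entire_dslope (entire_dslope hG 0) 0
  have hGz : ∀ z : ℂ, z ≠ 0 → G z = G 0 + deriv G 0 * z + z ^ 2 * H z := by
    intro z hz
    have h1 : H z = ((G z - G 0) / z - deriv G 0) / z := by
      rw [hH, dslope_of_ne _ hz, slope_def_field, dslope_of_ne _ hz, slope_def_field,
        dslope_same]
      simp [sub_zero]
    rw [h1]
    field_simp
    ring
  set D : ℝ := |C| + ‖G 0‖ + ‖deriv G 0‖ + |B| with hD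
  have hHbound : ∀ z : ℂ, 1 ≤ ‖z‖ → ‖H z‖ ≤ D * ‖z‖ ^ (-((1:ℝ)/2)) := by
    intro z hz1
    have hz : z ≠ 0 := by intro h; rw [h] at hz1; simp at hz1; linarith
    have hzpos : (0:ℝ) < ‖z‖ := by positivity
    have hnum : ‖G z - G 0 - deriv G 0 * z‖ ≤ D * ‖z‖ ^ ((3:ℝ)/2) := by
      have h32 : (1:ℝ) ≤ ‖z‖ ^ ((3:ℝ)/2) := Real.one_le_rpow hz1 (by norm_num)
      have hzle : ‖z‖ ≤ ‖z‖ ^ ((3:ℝ)/2) := by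
        calc ‖z‖ = ‖z‖ ^ (1:ℝ) := (Real.rpow_one _).symm
          _ ≤ ‖z‖ ^ ((3:ℝ)/2) := Real.rpow_le_rpow_of_exponent_le hz1 (by norm_num)
      calc ‖G z - G 0 - deriv G 0 * z‖
          ≤ ‖G z‖ + ‖G 0‖ + ‖deriv G 0 * z‖ := by
            calc _ ≤ ‖G z - G 0‖ + ‖deriv G 0 * z‖ := norm_sub_le _ _
              _ ≤ ‖G z‖ + ‖G 0‖ + ‖deriv G 0 * z‖ := by
                  have := norm_sub_le (G z) (G 0); linarith
        _ ≤ (C + B * ‖z‖ ^ ((3:ℝ)/2)) + ‖G 0‖ + ‖deriv G 0‖ * ‖z‖ := by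
            rw [norm_mul]; gcongr; exact hbound z hz1
        _ ≤ |C| * ‖z‖ ^ ((3:ℝ)/2) + |B| * ‖z‖ ^ ((3:ℝ)/2) + ‖G 0‖ * ‖z‖ ^ ((3:ℝ)/2)
            + ‖deriv G 0‖ * ‖z‖ ^ ((3:ℝ)/2) := by
            have hC : C ≤ |C| * ‖z‖ ^ ((3:ℝ)/2) := by
              calc C ≤ |C| := le_abs_self C
                _ = |C| * 1 := (mul_one _).symm
                _ ≤ |C| * ‖z‖ ^ ((3:ℝ)/2) := by
                    apply mul_le_mul_of_nonneg_left _ (abs_nonneg C)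
                    calc (1:ℝ) ≤ ‖z‖ := hz1
                      _ = ‖z‖ ^ (1:ℝ) := (Real.rpow_one _).symm
                      _ ≤ _ := Real.rpow_le_rpow_of_exponent_le hz1 (by norm_num)
            have hB : B * ‖z‖ ^ ((3:ℝ)/2) ≤ |B| * ‖z‖ ^ ((3:ℝ)/2) :=
              mul_le_mul_of_nonneg_right (le_abs_self B) (by positivity)
            have hG0 : ‖G 0‖ ≤ ‖G 0‖ * ‖z‖ ^ ((3:ℝ)/2) := by
              calc ‖G 0‖ = ‖G 0‖ * 1 := (mul_one _).symm
                _ ≤ _ := by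
                    apply mul_le_mul_of_nonneg_left _ (norm_nonneg _)
                    calc (1:ℝ) ≤ ‖z‖ := hz1
                      _ = ‖z‖ ^ (1:ℝ) := (Real.rpow_one _).symm
                      _ ≤ _ := Real.rpow_le_rpow_of_exponent_le hz1 (by norm_num)
            have hd0 : ‖deriv G 0‖ * ‖z‖ ≤ ‖deriv G 0‖ * ‖z‖ ^ ((3:ℝ)/2) := by
              gcongr
            linarith
        _ = D * ‖z‖ ^ ((3:ℝ)/2) := by rw [hD]; ring
    have hHz : ‖H z‖ = ‖G z - G 0 - deriv G 0 * z‖ / ‖z‖ ^ 2 := by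
      have := hGz z hz
      have h2 : z ^ 2 * H z = G z - G 0 - deriv G 0 * z := by rw [this]; ring
      rw [← h2, norm_mul, norm_pow, mul_comm, mul_div_assoc,
        div_self (pow_ne_zero 2 (ne_of_gt hzpos)), mul_one]
    rw [hHz]
    rw [div_le_iff₀ (by positivity)]
    calc ‖G z - G 0 - deriv G 0 * z‖ ≤ D * ‖z‖ ^ ((3:ℝ)/2) := hnum
      _ = D * ‖z‖ ^ (-((1:ℝ)/2)) * ‖z‖ ^ 2 := by
          rw [mul_assoc, ← Real.rpow_natCast ‖z‖ 2, ← Real.rpow_add hzpos]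
          norm_num
  have hten : Tendsto H (cocompact ℂ) (nhds 0) := by
    refine squeeze_zero_norm' (a := fun z : ℂ => D * ‖z‖ ^ (-((1:ℝ)/2))) ?_ ?_
    · filter_upwards [tendsto_norm_cocompact_atTop.eventually_ge_atTop 1] with z hz
      exact hHbound z hz
    · have hreal : Tendsto (fun r : ℝ => D * r ^ (-((1:ℝ)/2))) atTop (nhds 0) := by
        have := (tendsto_rpow_neg_atTop (by norm_num : (0:ℝ) < 1/2)).const_mul D
        simpa using this
      exact hreal.comp tendsto_norm_cocompact_atTop
  have hH0 : H = Function.const ℂ 0 := hHd.eq_const_of_tendsto_cocompact hten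
  intro z
  rcases eq_or_ne z 0 with rfl | hz
  · simp
  · rw [hGz z hz, hH0]; simp

theorem stmt_7 (f : ℂ → ℂ) (hf : Differentiable ℂ f)
    (hzeros : {z : ℂ | f z = 0}.Finite)
    (hord : ∀ ε : ℝ, 0 < ε → ∃ R : ℝ, 0 < R ∧ ∀ lam : ℂ, R ≤ ‖lam‖ →
      ‖f lam‖ ≤ Real.exp (‖lam‖ ^ ((1 : ℝ) + ε))) :
    ∃ (g : Polynomial ℂ) (c : ℂ), ∀ lam : ℂ,
      f lam = g.eval lam * Complex.exp (c * lam) := by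
  obtain ⟨P, h, hh, hhne, hfP⟩ := factor_zeros hzeros.toFinset.card f hf hzeros le_rfl
  obtain ⟨G, hGd, hGexp⟩ := exists_log hh hhne
  -- growth bound on f with exponent 3/2
  obtain ⟨R₀, hR₀pos, hford⟩ := hord (1/2) (by norm_num)
  have hford' : ∀ z : ℂ, R₀ ≤ ‖z‖ → ‖f z‖ ≤ Real.exp (‖z‖ ^ ((3:ℝ)/2)) := by
    intro z hz
    have := hford z hz
    norm_num at this ⊢
    exact this
  -- lower bound on the polynomial
  have hPlow : ∃ c : ℝ, 0 < c ∧ ∃ R₁ : ℝ, ∀ z : ℂ, R₁ ≤ ‖z‖ → c ≤ ‖P.eval z‖ := by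
    by_cases hdeg : 0 < P.degree
    · have := (P.tendsto_norm_atTop hdeg
        (tendsto_comap : Tendsto (fun z : ℂ => ‖z‖) (comap norm atTop) atTop)).eventually_ge_atTop 1
      rw [eventually_comap] at this
      obtain ⟨R₁, hR₁⟩ := eventually_atTop.mp this
      exact ⟨1, one_pos, R₁, fun z hz => hR₁ ‖z‖ hz z rfl⟩
    · -- P is constant
      have hnd : P.natDegree = 0 := Polynomial.natDegree_eq_zero_iff_degree_le_zero.mpr
        (not_lt.mp hdeg)
      have hPC : P = Polynomial.C (P.coeff 0) := Polynomial.eq_C_of_natDegree_eq_zero hnd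
      have ha0 : P.coeff 0 ≠ 0 := by
        intro h0
        have : ∀ z, f z = 0 := by
          intro z; rw [hfP z, hPC]; simp [h0]
        have huniv : {z : ℂ | f z = 0} = univ := eq_univ_of_forall fun z => this z
        rw [huniv] at hzeros
        exact infinite_univ hzeros
      refine ⟨‖P.coeff 0‖, norm_pos_iff.mpr ha0, 0, fun z _ => ?_⟩
      conv_rhs => rw [hPC]
      simp
  obtain ⟨c₀, hc₀, R₁, hPl⟩ := hPlow
  -- global Re G bound
  set R₂ : ℝ := max (max R₀ R₁) 1 with hR₂
  obtain ⟨M₂, hM₂⟩ := (isCompact_closedBall (0:ℂ) R₂).exists_bound_of_continuousOn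
    hGd.continuous.continuousOn
  set M : ℝ := max (|Real.log c₀| + M₂ + 1) 1 with hM
  have hReG : ∀ z : ℂ, (G z).re ≤ ‖z‖ ^ ((3:ℝ)/2) + M := by
    intro z
    rcases le_or_gt ‖z‖ R₂ with hz | hz
    · have h1 : (G z).re ≤ ‖G z‖ := Complex.re_le_norm _
      have h2 : ‖G z‖ ≤ M₂ := hM₂ z (by simpa [mem_closedBall, dist_zero_right] using hz)
      have h3 : (0:ℝ) ≤ ‖z‖ ^ ((3:ℝ)/2) := Real.rpow_nonneg (norm_nonneg _) _
      have h4 : M₂ ≤ M := by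
        have h5 : M₂ ≤ |Real.log c₀| + M₂ + 1 := by
          have := abs_nonneg (Real.log c₀); linarith
        exact le_trans h5 (le_max_left _ _)
      linarith
    · have hzR₀ : R₀ ≤ ‖z‖ := le_trans (le_trans (le_max_left _ _) (le_max_left _ _)) hz.le
      have hzR₁ : R₁ ≤ ‖z‖ := le_trans (le_trans (le_max_right _ _) (le_max_left _ _)) hz.le
      have hhz : ‖h z‖ = Real.exp ((G z).re) := by
        rw [hGexp z, Complex.norm_exp]
      have hfz : ‖f z‖ = ‖P.eval z‖ * ‖h z‖ := by rw [hfP z, norm_mul]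
      have hkey : Real.exp ((G z).re) ≤ Real.exp (‖z‖ ^ ((3:ℝ)/2)) / c₀ := by
        rw [← hhz, le_div_iff₀ hc₀]
        calc ‖h z‖ * c₀ ≤ ‖h z‖ * ‖P.eval z‖ := by
              apply mul_le_mul_of_nonneg_left (hPl z hzR₁) (norm_nonneg _)
          _ = ‖f z‖ := by rw [hfz]; ring
          _ ≤ Real.exp (‖z‖ ^ ((3:ℝ)/2)) := hford' z hzR₀
      have := Real.log_le_log (Real.exp_pos _) hkey
      rw [Real.log_exp, Real.log_div (Real.exp_ne_zero _) (ne_of_gt hc₀), Real.log_exp] at this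
      have habs : -Real.log c₀ ≤ |Real.log c₀| := neg_le_abs _
      have hM₂0 : 0 ≤ M₂ := le_trans (norm_nonneg (G 0))
        (hM₂ 0 (mem_closedBall_self (by positivity)))
      have : (G z).re ≤ ‖z‖ ^ ((3:ℝ)/2) + |Real.log c₀| := by linarith
      have hMle : |Real.log c₀| ≤ M := le_trans (by linarith) (le_max_left _ _)
      linarith
  -- Borel–Caratheodory bound on G
  have hGbound : ∀ z : ℂ, 1 ≤ ‖z‖ →
      ‖G z‖ ≤ (‖G 0‖ + 2 * (M + |(G 0).re| + 1)) + (2 * 2 ^ ((3:ℝ)/2)) * ‖z‖ ^ ((3:ℝ)/2) := by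
    intro z hz1
    set R : ℝ := 2 * ‖z‖ with hRdef
    have hRpos : 0 < R := by positivity
    set A : ℝ := R ^ ((3:ℝ)/2) + M + |(G 0).re| + 1 with hA
    have hApos : 0 < A := by
      have : (0:ℝ) ≤ R ^ ((3:ℝ)/2) := Real.rpow_nonneg hRpos.le _
      have hM1 : (1:ℝ) ≤ M := le_max_right _ _
      positivity
    have hre : ∀ w ∈ ball (0:ℂ) R, (G w).re - (G 0).re < A := by
      intro w hw
      have hwn : ‖w‖ < R := by simpa [mem_ball, dist_zero_right] using hw
      have h1 : (G w).re ≤ ‖w‖ ^ ((3:ℝ)/2) + M := hReG w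
      have h2 : ‖w‖ ^ ((3:ℝ)/2) ≤ R ^ ((3:ℝ)/2) :=
        Real.rpow_le_rpow (norm_nonneg _) hwn.le (by norm_num)
      have h3 : -(G 0).re ≤ |(G 0).re| := neg_le_abs _
      rw [hA]; linarith
    have hbc := borel_caratheodory hGd hRpos hApos hre z (by rw [hRdef]; linarith)
    have htriangle : ‖G z‖ ≤ ‖G 0‖ + 2 * A := by
      have := norm_sub_norm_le (G z) (G 0)
      linarith [hbc]
    have hR32 : R ^ ((3:ℝ)/2) = 2 ^ ((3:ℝ)/2) * ‖z‖ ^ ((3:ℝ)/2) := by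
      rw [hRdef, Real.mul_rpow (by norm_num) (norm_nonneg _)]
    rw [hA] at htriangle
    rw [hR32] at htriangle
    linarith
  have haff := affine_of_growth hGd hGbound
  refine ⟨Polynomial.C (Complex.exp (G 0)) * P, deriv G 0, fun lam => ?_⟩
  rw [hfP lam, hGexp lam, haff lam]
  rw [Complex.exp_add]
  simp only [Polynomial.eval_mul, Polynomial.eval_C]
  ring
end

section
/- Let f(λ) = a_h(λ)e^{−s_h λ} + ⋯ + a_l(λ)e^{−s_l λ} where s_h < ⋯ < s_l are distinct real numbers and a_h, a_l are nonzero complex polynomials (with at least two terms). Then f(λ) = 0 has infinitely many roots in ℂ. -/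
open Complex Metric Bornology Finset Filter Polynomial

/-- Minimum modulus zero test: if an entire function is smaller at the center than
its minimum on the sphere, it has a zero in the closed ball. -/
lemma lemA {g : ℂ → ℂ} (hg : Differentiable ℂ g) {c : ℂ} {ρ m : ℝ} (hρ : 0 < ρ)
    (hm : ∀ z ∈ sphere c ρ, m ≤ ‖g z‖) (hc : ‖g c‖ < m) :
    ∃ z ∈ closedBall c ρ, g z = 0 := by
  by_contra h
  push_neg at h
  have hm0 : 0 < m := lt_of_le_of_lt (norm_nonneg _) hc
  have hinv : DifferentiableOn ℂ (fun z => (g z)⁻¹) (closedBall c ρ) := by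
    intro z hz
    exact ((hg z).inv (h z hz)).differentiableWithinAt
  have hb : IsBounded (ball c ρ) := isBounded_ball
  have hcl : closure (ball c ρ) = closedBall c ρ := closure_ball c hρ.ne'
  have hdc : DiffContOnCl ℂ (fun z => (g z)⁻¹) (ball c ρ) := by
    refine ⟨hinv.mono ball_subset_closedBall, ?_⟩
    rw [hcl]
    exact hinv.continuousOn
  have hfr : ∀ z ∈ frontier (ball c ρ), ‖(g z)⁻¹‖ ≤ m⁻¹ := by
    intro z hz
    rw [frontier_ball c hρ.ne'] at hz
    rw [norm_inv]
    exact inv_anti₀ hm0 (hm z hz)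
  have hcc : c ∈ closure (ball c ρ) := by
    rw [hcl]; exact mem_closedBall_self hρ.le
  have := Complex.norm_le_of_forall_mem_frontier_norm_le hb hdc hfr hcc
  rw [norm_inv] at this
  have hgc : 0 < ‖g c‖ := norm_pos_iff.mpr (h c (mem_closedBall_self hρ.le))
  have : m ≤ ‖g c‖ := by
    rwa [inv_le_inv₀ hgc hm0] at this
  exact absurd hc (not_lt.mpr this)

/-- Half-plane lower bound: the term with the largest exponent dominates. -/
lemma lemD {ι : Type*} [Fintype ι] [DecidableEq ι] (c : ι → ℂ) (ω : ι → ℝ) (M : ι)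
    (hM : ∀ j, j ≠ M → ω j < ω M) (hc : c M ≠ 0) :
    ∃ X : ℝ, ∀ z : ℂ, X ≤ z.re →
      ‖c M‖ / 2 * Real.exp (ω M * z.re) ≤ ‖∑ i, c i * Complex.exp (ω i * z)‖ := by
  set F : ℝ → ℝ := fun x => ∑ i ∈ univ.erase M, ‖c i‖ * Real.exp ((ω i - ω M) * x) with hF
  have hFt : Filter.Tendsto F Filter.atTop (nhds 0) := by
    have : Filter.Tendsto (fun x => ∑ i ∈ univ.erase M, ‖c i‖ * Real.exp ((ω i - ω M) * x))
        Filter.atTop (nhds (∑ i ∈ univ.erase M, (0:ℝ))) := by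
      refine tendsto_finset_sum _ fun i hi => ?_
      rw [show (0:ℝ) = ‖c i‖ * 0 by ring]
      refine Filter.Tendsto.const_mul _ ?_
      refine Real.tendsto_exp_atBot.comp ?_
      have hneg : ω i - ω M < 0 := sub_neg.mpr (hM i (Finset.ne_of_mem_erase hi))
      exact (Filter.tendsto_const_mul_atBot_of_neg hneg).mpr Filter.tendsto_id
    rw [Finset.sum_const_zero] at this
    exact this
  have hev : ∀ᶠ x in Filter.atTop, F x ≤ ‖c M‖ / 2 := by
    have hpos : 0 < ‖c M‖ / 2 := by
      have := norm_pos_iff.mpr hc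
      linarith
    filter_upwards [hFt.eventually (eventually_le_nhds hpos)] with x hx using hx
  obtain ⟨X, hX⟩ := Filter.eventually_atTop.mp hev
  refine ⟨X, fun z hz => ?_⟩
  have hnorm : ∀ i : ι, ‖c i * Complex.exp ((ω i : ℂ) * z)‖ = ‖c i‖ * Real.exp (ω i * z.re) := by
    intro i
    rw [norm_mul, Complex.norm_exp]
    congr 2
    simp
  have hsplit : (∑ i, c i * Complex.exp ((ω i : ℂ) * z)) =
      c M * Complex.exp ((ω M : ℂ) * z) + ∑ i ∈ univ.erase M, c i * Complex.exp ((ω i : ℂ) * z) := by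
    rw [← Finset.add_sum_erase _ _ (mem_univ M)]
  have htail : ‖∑ i ∈ univ.erase M, c i * Complex.exp ((ω i : ℂ) * z)‖ ≤
      F z.re * Real.exp (ω M * z.re) := by
    refine (norm_sum_le _ _).trans ?_
    rw [hF, Finset.sum_mul]
    refine Finset.sum_le_sum fun i hi => ?_
    rw [hnorm i, mul_assoc, ← Real.exp_add]
    apply le_of_eq
    congr 2
    ring
  calc ‖c M‖ / 2 * Real.exp (ω M * z.re)
      ≤ (‖c M‖ - F z.re) * Real.exp (ω M * z.re) := by
        apply mul_le_mul_of_nonneg_right _ (Real.exp_pos _).le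
        have := hX z.re hz
        linarith
    _ ≤ ‖c M * Complex.exp ((ω M : ℂ) * z)‖ -
        ‖∑ i ∈ univ.erase M, c i * Complex.exp ((ω i : ℂ) * z)‖ := by
        rw [hnorm M, sub_mul]
        have := htail
        linarith
    _ ≤ ‖∑ i, c i * Complex.exp ((ω i : ℂ) * z)‖ := by
        rw [hsplit]
        have h1 : ‖c M * Complex.exp ((ω M : ℂ) * z)‖ ≤
            ‖c M * Complex.exp ((ω M : ℂ) * z) + ∑ i ∈ univ.erase M, c i * Complex.exp ((ω i : ℂ) * z)‖
            + ‖∑ i ∈ univ.erase M, c i * Complex.exp ((ω i : ℂ) * z)‖ := by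
          calc ‖c M * Complex.exp ((ω M : ℂ) * z)‖
              = ‖(c M * Complex.exp ((ω M : ℂ) * z) + ∑ i ∈ univ.erase M, c i * Complex.exp ((ω i : ℂ) * z))
                - ∑ i ∈ univ.erase M, c i * Complex.exp ((ω i : ℂ) * z)‖ := by
                congr 1
                ring
            _ ≤ _ := norm_sub_le _ _
        linarith

/-- Zero transfer: if entire functions `g k` converge to `G` uniformly on a ball around an
isolated zero of `G`, then eventually `g k` has a zero in that ball. -/
lemma lemC {G : ℂ → ℂ} (hG : Differentiable ℂ G) {z₀ : ℂ} (hz : G z₀ = 0)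
    {w : ℂ} (hw : G w ≠ 0) {g : ℕ → ℂ → ℂ} (hg : ∀ k, Differentiable ℂ (g k))
    (hconv : ∀ ε > 0, ∀ᶠ k in atTop, ∀ z ∈ closedBall z₀ 1, ‖g k z - G z‖ ≤ ε) :
    ∀ᶠ k in atTop, ∃ z ∈ closedBall z₀ 1, g k z = 0 := by
  have hA : AnalyticAt ℂ G z₀ := hG.analyticAt z₀
  rcases hA.eventually_eq_zero_or_eventually_ne_zero with h0 | hne
  · exfalso
    have hAO : AnalyticOnNhd ℂ G Set.univ := fun z _ => hG.analyticAt z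
    have := hAO.eqOn_zero_of_preconnected_of_eventuallyEq_zero
      isPreconnected_univ (Set.mem_univ z₀) h0
    exact hw (this (Set.mem_univ w))
  · rw [eventually_nhdsWithin_iff, Metric.eventually_nhds_iff] at hne
    obtain ⟨ε, hε, hne⟩ := hne
    set ρ : ℝ := min (ε / 2) 1 with hρdef
    have hρ : 0 < ρ := lt_min (by linarith) one_pos
    have hρ1 : ρ ≤ 1 := min_le_right _ _
    have hsph : ∀ z ∈ sphere z₀ ρ, G z ≠ 0 := by
      intro z hz'
      rw [mem_sphere_iff_norm] at hz'
      apply hne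
      · rw [dist_eq_norm, hz']
        exact lt_of_le_of_lt (min_le_left _ _) (by linarith)
      · intro hzz
        rw [hzz] at hz'
        simp at hz'
        exact hρ.ne hz'
    obtain ⟨zm, hzm, hmin⟩ := (isCompact_sphere z₀ ρ).exists_isMinOn
      (NormedSpace.sphere_nonempty.mpr hρ.le) (hG.continuous.norm.continuousOn)
    set m : ℝ := ‖G zm‖ with hm
    have hm0 : 0 < m := norm_pos_iff.mpr (hsph zm hzm)
    filter_upwards [hconv (m / 3) (by linarith)] with k hk
    have hsub : closedBall z₀ ρ ⊆ closedBall z₀ 1 := closedBall_subset_closedBall hρ1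
    obtain ⟨z, hz1, hz2⟩ := lemA (hg k) hρ (m := 2 * m / 3) (c := z₀)
      (fun z hzs => by
        have h1 : ‖g k z - G z‖ ≤ m / 3 := hk z (hsub (sphere_subset_closedBall hzs))
        have h2 : m ≤ ‖G z‖ := hmin hzs
        have := norm_sub_norm_le (g k z) (G z)
        have h3 : ‖G z‖ - ‖g k z‖ ≤ m / 3 := by
          have := norm_sub_norm_le (G z) (g k z)
          rw [← norm_neg (G z - g k z)] at this
          simp only [neg_sub] at this
          linarith
        linarith)
      (by
        have : ‖g k z₀ - G z₀‖ ≤ m / 3 := hk z₀ (mem_closedBall_self (by linarith))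
        rw [hz, sub_zero] at this
        linarith)
    exact ⟨z, hsub hz1, hz2⟩

lemma expSplit (t : ℝ) (z : ℂ) :
    Complex.exp (t * z) = (Real.exp (t * z.re) : ℂ) * Complex.exp ((t * z.im : ℝ) * I) := by
  rw [Complex.ofReal_exp, ← Complex.exp_add]
  congr 1
  simp [Complex.ext_iff, Complex.mul_re, Complex.mul_im]

lemma sumDiff {ι : Type*} [Fintype ι] (c : ι → ℂ) (ω : ι → ℝ) :
    Differentiable ℂ (fun z => ∑ i, c i * Complex.exp ((ω i : ℂ) * z)) := by
  apply Differentiable.fun_sum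
  intro i _
  exact (Complex.differentiable_exp.comp (differentiable_id.const_mul _)).const_mul _

/-- Normalized existence of a zero: min exponent is 0. -/
lemma lemB0 {ι : Type*} [Fintype ι] [DecidableEq ι] (c : ι → ℂ) (ω : ι → ℝ) (m M : ι)
    (hm : ∀ j, j ≠ m → ω m < ω j) (hM : ∀ j, j ≠ M → ω j < ω M) (hne : m ≠ M)
    (hcm : c m ≠ 0) (hcM : c M ≠ 0) (h0 : ω m = 0) :
    ∃ z : ℂ, ∑ i, c i * Complex.exp ((ω i : ℂ) * z) = 0 := by
  by_contra hnz
  push_neg at hnz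
  set g : ℂ → ℂ := fun z => ∑ i, c i * Complex.exp ((ω i : ℂ) * z) with hg
  have hgd : Differentiable ℂ g := sumDiff c ω
  have hωM : 0 < ω M := by
    have := hm M (Ne.symm hne)
    rwa [h0] at this
  -- right half-plane bound
  obtain ⟨XR, hXR⟩ := lemD c ω M hM hcM
  -- left half-plane bound via reflection
  obtain ⟨XL, hXL⟩ := lemD c (fun i => -ω i) m (fun j hj => neg_lt_neg (hm j hj)) hcm
  have hleft : ∀ z : ℂ, z.re ≤ -XL → ‖c m‖ / 2 ≤ ‖g z‖ := by
    intro z hz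
    have h1 := hXL (-z) (by rw [Complex.neg_re]; linarith)
    have h2 : (∑ i, c i * Complex.exp (((-ω i : ℝ) : ℂ) * -z)) = g z := by
      apply Finset.sum_congr rfl
      intro i _
      congr 1
      push_cast
      ring
    rw [h2] at h1
    calc ‖c m‖ / 2 = ‖c m‖ / 2 * Real.exp (-ω m * (-z).re) := by
          rw [h0]; simp
      _ ≤ ‖g z‖ := h1
  set R : ℝ := max XR XL with hR
  by_cases hδ : ∃ δ > 0, ∀ z : ℂ, -R ≤ z.re → z.re ≤ R → δ ≤ ‖g z‖
  · -- Liouville case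
    obtain ⟨δ, hδpos, hδ⟩ := hδ
    set L : ℝ := min δ (min (‖c m‖ / 2) (‖c M‖ / 2 * Real.exp (ω M * R))) with hL
    have hcm2 : 0 < ‖c m‖ / 2 := by have := norm_pos_iff.mpr hcm; linarith
    have hcM2 : 0 < ‖c M‖ / 2 := by have := norm_pos_iff.mpr hcM; linarith
    have hLpos : 0 < L :=
      lt_min hδpos (lt_min hcm2 (mul_pos hcM2 (Real.exp_pos _)))
    have hlow : ∀ z : ℂ, L ≤ ‖g z‖ := by
      intro z
      rcases le_total z.re (-R) with h | h
      · exact le_trans (le_trans (min_le_right _ _) (min_le_left _ _))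
          (hleft z (h.trans (neg_le_neg (le_max_right _ _))))
      rcases le_total R z.re with h' | h'
      · refine le_trans (le_trans (min_le_right _ _) (min_le_right _ _)) ?_
        calc ‖c M‖ / 2 * Real.exp (ω M * R) ≤ ‖c M‖ / 2 * Real.exp (ω M * z.re) := by
              apply mul_le_mul_of_nonneg_left _ (by positivity)
              exact Real.exp_le_exp.mpr (mul_le_mul_of_nonneg_left h' hωM.le)

          _ ≤ ‖g z‖ := hXR z ((le_max_left _ _).trans h')
      · exact le_trans (min_le_left _ _) (hδ z (by linarith) h')
    have hfd : Differentiable ℂ (fun z => (g z)⁻¹) := hgd.inv hnz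
    have hfb : IsBounded (Set.range fun z => (g z)⁻¹) := by
      rw [isBounded_iff_forall_norm_le]
      refine ⟨L⁻¹, ?_⟩
      rintro _ ⟨z, rfl⟩
      rw [norm_inv]
      exact inv_anti₀ hLpos (hlow z)
    obtain ⟨C, hC⟩ := hfd.exists_const_forall_eq_of_bounded hfb
    have hK : ∀ z : ℂ, ‖g z‖ = ‖C‖⁻¹ := by
      intro z
      have h1 : (g z)⁻¹ = C := hC z
      have h2 : C ≠ 0 := by
        rw [← h1]
        exact inv_ne_zero (hnz z)
      rw [← h1, norm_inv, inv_inv]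
    have htt : Tendsto (fun x : ℝ => ‖c M‖ / 2 * Real.exp (ω M * x)) atTop atTop := by
      apply Tendsto.const_mul_atTop hcM2
      exact Real.tendsto_exp_atTop.comp ((tendsto_const_mul_atTop_of_pos hωM).mpr tendsto_id)
    obtain ⟨x, hx1, hx2⟩ := ((htt.eventually_gt_atTop (‖C‖⁻¹)).and (eventually_ge_atTop XR)).exists
    have hthis := hXR (x : ℂ) (by simpa using hx2)
    have h6 : (∑ i, c i * Complex.exp ((ω i : ℂ) * (x:ℂ))) = g (x:ℂ) := rfl
    rw [h6, hK] at hthis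
    simp only [Complex.ofReal_re] at hthis
    linarith
  · -- almost-periodicity case: produce a zero, contradiction
    push_neg at hδ
    have hseq : ∀ k : ℕ, ∃ z : ℂ, -R ≤ z.re ∧ z.re ≤ R ∧ ‖g z‖ < 1 / (k + 1) := by
      intro k
      obtain ⟨z, h1, h2, h3⟩ := hδ (1 / (k + 1)) (by positivity)
      exact ⟨z, h1, h2, h3⟩
    choose zs hz1 hz2 hz3 using hseq
    -- compactness in ℝ × (ι → ℂ)
    set v : ℕ → ℝ × (ι → ℂ) :=
      fun k => ((zs k).re, fun i => Complex.exp (((ω i * (zs k).im : ℝ)) * I)) with hv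
    have hvb : ∀ k, v k ∈ closedBall (0 : ℝ × (ι → ℂ)) (|R| + 1) := by
      intro k
      rw [mem_closedBall_zero_iff, Prod.norm_def]
      apply max_le
      · simp only [Real.norm_eq_abs]
        rw [abs_le]
        constructor
        · have := hz1 k; have : -|R| ≤ -R := neg_le_neg (le_abs_self R); linarith [hz1 k, le_abs_self R, neg_abs_le R]
        · linarith [hz2 k, le_abs_self R]
      · refine (pi_norm_le_iff_of_nonneg (by positivity)).mpr fun i => ?_
        rw [Complex.norm_exp_ofReal_mul_I]
        linarith [abs_nonneg R]
    obtain ⟨a, _, φ, hφ, hva⟩ := tendsto_subseq_of_bounded isBounded_closedBall hvb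
    set xs : ℝ := a.1 with hxs
    set u : ι → ℂ := a.2 with hu
    have hxconv : Tendsto (fun k => (zs (φ k)).re) atTop (nhds xs) :=
      (continuous_fst.tendsto a).comp hva
    have huconv : ∀ i, Tendsto (fun k => Complex.exp (((ω i * (zs (φ k)).im : ℝ)) * I))
        atTop (nhds (u i)) := by
      intro i
      have := ((continuous_apply i).comp continuous_snd).tendsto a |>.comp hva
      exact this
    have hunorm : ∀ i, ‖u i‖ = 1 := by
      intro i
      have h1 : Tendsto (fun k => ‖Complex.exp (((ω i * (zs (φ k)).im : ℝ)) * I)‖)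
          atTop (nhds ‖u i‖) := (continuous_norm.tendsto _).comp (huconv i)
      have h2 : (fun k => ‖Complex.exp (((ω i * (zs (φ k)).im : ℝ)) * I)‖) = fun _ => 1 := by
        funext k
        rw [Complex.norm_exp_ofReal_mul_I]
      rw [h2] at h1
      exact tendsto_nhds_unique h1 tendsto_const_nhds
    -- the limit function
    set G : ℂ → ℂ := fun z => ∑ i, (c i * u i) * Complex.exp ((ω i : ℂ) * z) with hG
    have hGd : Differentiable ℂ G := sumDiff _ ω
    -- G vanishes at xs
    have hGzero : G (xs : ℂ) = 0 := by
      have hlim : Tendsto (fun k => g (zs (φ k))) atTop (nhds (G (xs : ℂ))) := by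
        have hterm : ∀ i : ι, Tendsto (fun k => c i * Complex.exp ((ω i : ℂ) * zs (φ k)))
            atTop (nhds (c i * ((Real.exp (ω i * xs) : ℂ) * u i))) := by
          intro i
          have hsplit : ∀ k, c i * Complex.exp ((ω i : ℂ) * zs (φ k)) =
              c i * ((Real.exp (ω i * (zs (φ k)).re) : ℂ) *
                Complex.exp (((ω i * (zs (φ k)).im : ℝ)) * I)) := by
            intro k
            rw [expSplit]
          simp only [hsplit]
          have h1 : Tendsto (fun k => (Real.exp (ω i * (zs (φ k)).re) : ℂ))
              atTop (nhds ((Real.exp (ω i * xs) : ℂ))) := by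
            apply Tendsto.comp (Complex.continuous_ofReal.tendsto _)
            exact (Real.continuous_exp.tendsto _).comp (hxconv.const_mul _)
          exact (h1.mul (huconv i)).const_mul (c i)
        have hsum := tendsto_finset_sum Finset.univ (fun i _ => hterm i)
        have heq : (∑ i, c i * ((Real.exp (ω i * xs) : ℂ) * u i)) = G (xs : ℂ) := by
          rw [hG]
          apply Finset.sum_congr rfl
          intro i _
          rw [show Complex.exp ((ω i : ℂ) * (xs : ℂ)) = ((Real.exp (ω i * xs) : ℝ) : ℂ) by
            rw [← Complex.ofReal_mul, Complex.ofReal_exp]]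
          ring
        rw [heq] at hsum
        exact hsum
      have hlim0 : Tendsto (fun k => g (zs (φ k))) atTop (nhds 0) := by
        rw [tendsto_zero_iff_norm_tendsto_zero]
        apply squeeze_zero (fun k => norm_nonneg _) (fun k => (hz3 (φ k)).le)
        have h1 : Tendsto (fun k : ℕ => 1 / ((k : ℝ) + 1)) atTop (nhds 0) :=
          tendsto_one_div_add_atTop_nhds_zero_nat
        exact h1.comp hφ.tendsto_atTop
      exact tendsto_nhds_unique hlim hlim0
    -- G is nonzero somewhere
    obtain ⟨X₂, hX₂⟩ := lemD (fun i => c i * u i) ω M hM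
      (mul_ne_zero hcM (by
        intro h; have := hunorm M; rw [h] at this; simp at this))
    have hGw : G (X₂ : ℂ) ≠ 0 := by
      have := hX₂ (X₂ : ℂ) (by simp)
      intro h
      have h7 : (∑ i, (c i * u i) * Complex.exp ((ω i : ℂ) * (X₂:ℂ))) = G (X₂:ℂ) := rfl
      rw [h7, h] at this
      simp only [norm_zero] at this
      have h1 : 0 < ‖c M * u M‖ / 2 * Real.exp (ω M * (X₂:ℂ).re) := by
        apply mul_pos _ (Real.exp_pos _)
        have : c M * u M ≠ 0 := mul_ne_zero hcM (by
          intro h'; have := hunorm M; rw [h'] at this; simp at this)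
        have := norm_pos_iff.mpr this
        linarith
      linarith
    -- translated functions converge to G on the ball around xs
    set h : ℕ → ℂ → ℂ := fun k Z => g (Z + ((zs (φ k)).im : ℂ) * I) with hh
    have hhd : ∀ k, Differentiable ℂ (h k) := by
      intro k
      exact hgd.comp (differentiable_id.add_const _)
    have hhsplit : ∀ k Z, h k Z =
        ∑ i, (c i * Complex.exp (((ω i * (zs (φ k)).im : ℝ)) * I)) *
          Complex.exp ((ω i : ℂ) * Z) := by
      intro k Z
      rw [hh]
      apply Finset.sum_congr rfl
      intro i _
      rw [mul_add, Complex.exp_add]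
      push_cast
      ring
    have hconv : ∀ ε > 0, ∀ᶠ k in atTop, ∀ Z ∈ closedBall (xs : ℂ) 1, ‖h k Z - G Z‖ ≤ ε := by
      intro ε hε
      set Cb : ι → ℝ := fun i => ‖c i‖ * Real.exp (|ω i| * (|xs| + 1)) with hCb
      set D : ℝ := ∑ i, Cb i with hD
      have hD0 : 0 ≤ D := Finset.sum_nonneg fun i _ => by positivity
      have hev : ∀ᶠ k in atTop, ∀ i : ι,
          ‖Complex.exp (((ω i * (zs (φ k)).im : ℝ)) * I) - u i‖ ≤ ε / (D + 1) := by
        have hpos : 0 < ε / (D + 1) := div_pos hε (by linarith)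
        refine Filter.eventually_all.mpr fun i => ?_
        have h8 := (huconv i)
        rw [Metric.tendsto_atTop] at h8
        obtain ⟨N, hN⟩ := h8 _ hpos
        filter_upwards [eventually_ge_atTop N] with k hk
        rw [← dist_eq_norm]
        exact (hN k hk).le
      filter_upwards [hev] with k hk Z hZ
      rw [hhsplit]
      have key : (∑ i, (c i * Complex.exp (((ω i * (zs (φ k)).im : ℝ)) * I)) *
          Complex.exp ((ω i : ℂ) * Z)) - G Z =
          ∑ i, c i * (Complex.exp (((ω i * (zs (φ k)).im : ℝ)) * I) - u i) *
            Complex.exp ((ω i : ℂ) * Z) := by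
        rw [hG, ← Finset.sum_sub_distrib]
        apply Finset.sum_congr rfl
        intro i _
        ring
      rw [key]
      calc ‖∑ i, c i * (Complex.exp (((ω i * (zs (φ k)).im : ℝ)) * I) - u i) *
            Complex.exp ((ω i : ℂ) * Z)‖
          ≤ ∑ i, ‖c i * (Complex.exp (((ω i * (zs (φ k)).im : ℝ)) * I) - u i) *
            Complex.exp ((ω i : ℂ) * Z)‖ := norm_sum_le _ _
        _ ≤ ∑ i, Cb i * (ε / (D + 1)) := by
            apply Finset.sum_le_sum
            intro i _
            rw [norm_mul, norm_mul]
            have hb1 : ‖Complex.exp ((ω i : ℂ) * Z)‖ ≤ Real.exp (|ω i| * (|xs| + 1)) := by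
              rw [Complex.norm_exp]
              apply Real.exp_le_exp.mpr
              have h1 : ((ω i : ℂ) * Z).re = ω i * Z.re := by simp
              rw [h1]
              have h2 : |Z.re - xs| ≤ 1 := by
                have := mem_closedBall_iff_norm.mp hZ
                calc |Z.re - xs| = |(Z - (xs:ℂ)).re| := by simp
                  _ ≤ ‖Z - (xs:ℂ)‖ := Complex.abs_re_le_norm _
                  _ ≤ 1 := this
              have h3 : |Z.re| ≤ |xs| + 1 := by
                have := abs_sub_abs_le_abs_sub Z.re xs
                linarith [abs_abs_sub_abs_le_abs_sub Z.re xs]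
              calc ω i * Z.re ≤ |ω i * Z.re| := le_abs_self _
                _ = |ω i| * |Z.re| := abs_mul _ _
                _ ≤ |ω i| * (|xs| + 1) := by
                    apply mul_le_mul_of_nonneg_left h3 (abs_nonneg _)
            calc ‖c i‖ * ‖_ - u i‖ * ‖Complex.exp ((ω i : ℂ) * Z)‖
                ≤ ‖c i‖ * (ε / (D + 1)) * Real.exp (|ω i| * (|xs| + 1)) := by
                  apply mul_le_mul _ hb1 (norm_nonneg _) (by positivity)
                  exact mul_le_mul_of_nonneg_left (hk i) (norm_nonneg _)
              _ = Cb i * (ε / (D + 1)) := by rw [hCb]; ring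
        _ = D * (ε / (D + 1)) := by rw [hD, Finset.sum_mul]
        _ ≤ ε := by
            rw [div_eq_mul_inv]
            have h1 : D * (ε * (D + 1)⁻¹) = ε * (D * (D + 1)⁻¹) := by ring
            rw [h1]
            have h2 : D * (D + 1)⁻¹ ≤ 1 := by
              rw [mul_inv_le_iff₀ (by linarith)]
              linarith
            nlinarith
    have := lemC hGd hGzero hGw hhd hconv
    obtain ⟨k, Z, _, hZ0⟩ := this.exists
    exact hnz _ hZ0


lemma lemB {ι : Type*} [Fintype ι] [DecidableEq ι] (c : ι → ℂ) (ω : ι → ℝ) (m M : ι)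
    (hm : ∀ j, j ≠ m → ω m < ω j) (hM : ∀ j, j ≠ M → ω j < ω M) (hne : m ≠ M)
    (hcm : c m ≠ 0) (hcM : c M ≠ 0) :
    ∃ z : ℂ, ∑ i, c i * Complex.exp ((ω i : ℂ) * z) = 0 := by
  obtain ⟨z, hz⟩ := lemB0 c (fun i => ω i - ω m) m M
    (fun j hj => sub_lt_sub_right (hm j hj) _)
    (fun j hj => sub_lt_sub_right (hM j hj) _)
    hne hcm hcM (by simp)
  refine ⟨z, ?_⟩
  have key : (∑ i, c i * Complex.exp (((ω i - ω m : ℝ) : ℂ) * z)) *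
      Complex.exp (((ω m : ℝ) : ℂ) * z) = ∑ i, c i * Complex.exp ((ω i : ℂ) * z) := by
    rw [Finset.sum_mul]
    refine Finset.sum_congr rfl fun i _ => ?_
    rw [mul_assoc, ← Complex.exp_add]
    congr 2
    push_cast
    ring
  rw [← key, hz, zero_mul]

/-- Uniform convergence on the closed unit ball around `z₀`. -/
def UT (z₀ : ℂ) (F : ℕ → ℂ → ℂ) (L : ℂ → ℂ) : Prop :=
  ∀ ε > 0, ∀ᶠ k in atTop, ∀ Z ∈ closedBall z₀ 1, ‖F k Z - L Z‖ ≤ ε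

lemma UT.const (z₀ : ℂ) (c : ℂ) : UT z₀ (fun _ _ => c) (fun _ => c) := by
  intro ε hε
  filter_upwards with k Z _
  simp [hε.le]

lemma UT.of_tendsto {z₀ : ℂ} {b : ℕ → ℂ} {L : ℂ} (h : Tendsto b atTop (nhds L)) :
    UT z₀ (fun k _ => b k) (fun _ => L) := by
  intro ε hε
  rw [Metric.tendsto_atTop] at h
  obtain ⟨N, hN⟩ := h ε hε
  filter_upwards [eventually_ge_atTop N] with k hk Z _
  rw [← dist_eq_norm]
  exact (hN k hk).le

lemma UT.add {z₀ : ℂ} {F G : ℕ → ℂ → ℂ} {L M : ℂ → ℂ} (hF : UT z₀ F L) (hG : UT z₀ G M) :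
    UT z₀ (fun k Z => F k Z + G k Z) (fun Z => L Z + M Z) := by
  intro ε hε
  filter_upwards [hF (ε/2) (by linarith), hG (ε/2) (by linarith)] with k h1 h2 Z hZ
  calc ‖F k Z + G k Z - (L Z + M Z)‖ = ‖(F k Z - L Z) + (G k Z - M Z)‖ := by ring_nf
    _ ≤ ‖F k Z - L Z‖ + ‖G k Z - M Z‖ := norm_add_le _ _
    _ ≤ ε/2 + ε/2 := add_le_add (h1 Z hZ) (h2 Z hZ)
    _ = ε := by ring

lemma UT.mul {z₀ : ℂ} {F G : ℕ → ℂ → ℂ} {L M : ℂ → ℂ} {CL CM : ℝ}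
    (hF : UT z₀ F L) (hG : UT z₀ G M)
    (hL : ∀ Z ∈ closedBall z₀ 1, ‖L Z‖ ≤ CL) (hM : ∀ Z ∈ closedBall z₀ 1, ‖M Z‖ ≤ CM) :
    UT z₀ (fun k Z => F k Z * G k Z) (fun Z => L Z * M Z) := by
  intro ε hε
  have hCL : 0 ≤ CL := le_trans (norm_nonneg _) (hL z₀ (mem_closedBall_self zero_le_one))
  have hCM : 0 ≤ CM := le_trans (norm_nonneg _) (hM z₀ (mem_closedBall_self zero_le_one))
  set δ : ℝ := min 1 (ε / (CM + CL + 2)) with hδdef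
  have hδpos : 0 < δ := lt_min one_pos (by positivity)
  filter_upwards [hF δ hδpos, hG δ hδpos] with k h1 h2 Z hZ
  have e1 : F k Z * G k Z - L Z * M Z
      = (F k Z - L Z) * G k Z + L Z * (G k Z - M Z) := by ring
  have hGb : ‖G k Z‖ ≤ CM + 1 := by
    have := h2 Z hZ
    have := norm_sub_norm_le (G k Z) (M Z)
    have hδ1 : δ ≤ 1 := min_le_left _ _
    have := hM Z hZ
    linarith
  rw [e1]
  calc ‖(F k Z - L Z) * G k Z + L Z * (G k Z - M Z)‖
      ≤ ‖F k Z - L Z‖ * ‖G k Z‖ + ‖L Z‖ * ‖G k Z - M Z‖ := by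
        refine (norm_add_le _ _).trans ?_
        rw [norm_mul, norm_mul]
    _ ≤ δ * (CM + 1) + CL * δ := by
        refine add_le_add ?_ ?_
        · exact mul_le_mul (h1 Z hZ) hGb (norm_nonneg _) hδpos.le
        · exact mul_le_mul (hL Z hZ) (h2 Z hZ) (norm_nonneg _) hCL
    _ = δ * (CM + CL + 1) := by ring
    _ ≤ (ε / (CM + CL + 2)) * (CM + CL + 1) := by
        apply mul_le_mul_of_nonneg_right (min_le_right _ _) (by linarith)
    _ ≤ ε := by
        rw [div_mul_eq_mul_div, div_le_iff₀ (by linarith)]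
        nlinarith

lemma UT.sum {z₀ : ℂ} {ι : Type*} (T : Finset ι) (F : ι → ℕ → ℂ → ℂ) (L : ι → ℂ → ℂ)
    (h : ∀ i ∈ T, UT z₀ (F i) (L i)) :
    UT z₀ (fun k Z => ∑ i ∈ T, F i k Z) (fun Z => ∑ i ∈ T, L i Z) := by
  classical
  induction T using Finset.induction_on with
  | empty => simpa using UT.const z₀ 0
  | @insert i T hi ih =>
      have h1 := h i (Finset.mem_insert_self i T)
      have h2 := ih fun j hj => h j (Finset.mem_insert_of_mem hj)
      have := h1.add h2
      intro ε hε
      filter_upwards [this ε hε] with k hk Z hZ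
      rw [Finset.sum_insert hi, Finset.sum_insert hi]
      exact hk Z hZ

/-- Main polynomial asymptotics: `p(t k + Z) / (c k)^(deg p) → leadingCoeff p`
uniformly on the unit ball. -/
lemma utPoly (z₀ : ℂ) (c t : ℕ → ℂ)
    (hc : Tendsto (fun k => ‖c k‖) atTop atTop)
    (ht : Tendsto (fun k => t k / c k) atTop (nhds 1)) (p : Polynomial ℂ) :
    UT z₀ (fun k Z => p.eval (t k + Z) / (c k) ^ p.natDegree) (fun _ => p.leadingCoeff) := by
  -- ratio lemma
  have hratio : UT z₀ (fun k Z => (t k + Z) / c k) (fun _ => 1) := by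
    intro ε hε
    have h1 : ∀ᶠ k in atTop, ‖t k / c k - 1‖ ≤ ε / 2 := by
      have := Metric.tendsto_atTop.mp ht (ε/2) (by linarith)
      obtain ⟨N, hN⟩ := this
      filter_upwards [eventually_ge_atTop N] with k hk
      rw [← dist_eq_norm]
      exact (hN k hk).le
    have h2 : ∀ᶠ k in atTop, (‖z₀‖ + 1) / ‖c k‖ ≤ ε / 2 := by
      have hcc : Tendsto (fun k => (‖z₀‖ + 1) / ‖c k‖) atTop (nhds 0) :=
        Tendsto.div_atTop tendsto_const_nhds hc
      have := hcc.eventually (eventually_le_nhds (show (0:ℝ) < ε/2 by linarith))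
      filter_upwards [this] with k hk using hk
    have h3 : ∀ᶠ k in atTop, (1:ℝ) ≤ ‖c k‖ := hc.eventually_ge_atTop 1
    filter_upwards [h1, h2, h3] with k hk1 hk2 hk3 Z hZ
    have hc0 : c k ≠ 0 := by
      intro h; rw [h] at hk3; simp at hk3; linarith
    have e1 : (t k + Z) / c k - 1 = (t k / c k - 1) + Z / c k := by
      field_simp
      ring
    rw [e1]
    have hZb : ‖Z‖ ≤ ‖z₀‖ + 1 := by
      have := mem_closedBall_iff_norm.mp hZ
      have := norm_sub_norm_le Z z₀
      linarith
    calc ‖(t k / c k - 1) + Z / c k‖ ≤ ‖t k / c k - 1‖ + ‖Z / c k‖ := norm_add_le _ _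
      _ ≤ ε/2 + (‖z₀‖ + 1) / ‖c k‖ := by
          refine add_le_add hk1 ?_
          rw [norm_div]
          apply div_le_div_of_nonneg_right hZb ?_ |>.trans (le_refl _)
          linarith
      _ ≤ ε/2 + ε/2 := by linarith
      _ = ε := by ring
  -- auxiliary: smallness of `const / c^(j+1)`
  have hsmall : ∀ (b : ℂ) (j : ℕ), UT z₀ (fun k _ => b / (c k) ^ (j + 1)) (fun _ => 0) := by
    intro b j
    have hb : Tendsto (fun k => b / (c k) ^ (j + 1)) atTop (nhds 0) := by
      rw [tendsto_zero_iff_norm_tendsto_zero]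
      have h0 : Tendsto (fun k => ‖b‖ / ‖c k‖ ^ (j + 1)) atTop (nhds 0) :=
        Tendsto.div_atTop tendsto_const_nhds
          ((tendsto_pow_atTop (Nat.succ_ne_zero j)).comp hc)
      convert h0 using 2 with k
      rw [norm_div, norm_pow]
    exact UT.of_tendsto hb
  -- main induction
  have main : ∀ (n : ℕ) (p : Polynomial ℂ), p.natDegree ≤ n →
      UT z₀ (fun k Z => p.eval (t k + Z) / (c k) ^ p.natDegree) (fun _ => p.leadingCoeff) := by
    intro n
    induction n with
    | zero =>
        intro p hp
        obtain ⟨a0, rfl⟩ := Polynomial.natDegree_eq_zero.mp (Nat.le_zero.mp hp)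
        simpa using UT.const z₀ a0
    | succ n ih =>
        intro p hp
        by_cases hd : p.natDegree = 0
        · obtain ⟨a0, rfl⟩ := Polynomial.natDegree_eq_zero.mp hd
          simpa using UT.const z₀ a0
        · have hd1 : 1 ≤ p.natDegree := Nat.one_le_iff_ne_zero.mpr hd
          have hdiv : p.divX.natDegree = p.natDegree - 1 :=
            Polynomial.natDegree_divX_eq_natDegree_tsub_one
          have hdivle : p.divX.natDegree ≤ n := by omega
          have hlc : p.divX.leadingCoeff = p.leadingCoeff := by
            rw [Polynomial.leadingCoeff, Polynomial.leadingCoeff, Polynomial.coeff_divX, hdiv]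
            congr 1
            omega
          have ihd := ih p.divX hdivle
          -- p.eval w = p.divX.eval w * w + p.coeff 0
          have heval : ∀ w : ℂ, p.eval w = p.divX.eval w * w + p.coeff 0 := by
            intro w
            conv_lhs => rw [← Polynomial.divX_mul_X_add p]
            simp
          have hpow : ∀ k : ℕ, c k ≠ 0 → ((c k) ^ p.natDegree : ℂ) =
              (c k) ^ p.divX.natDegree * c k := by
            intro k hck
            rw [hdiv, ← pow_succ]
            congr 1
            omega
          -- combine
          have hmul := (ihd.mul hratio
            (fun Z _ => le_refl ‖p.divX.leadingCoeff‖)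
            (fun Z _ => norm_one.le)).add (hsmall (p.coeff 0) (p.natDegree - 1))
          intro ε hε
          have h3 : ∀ᶠ k in atTop, (1:ℝ) ≤ ‖c k‖ := hc.eventually_ge_atTop 1
          filter_upwards [hmul ε hε, h3] with k hk hk3 Z hZ
          have hck : c k ≠ 0 := by
            intro h; rw [h] at hk3; simp at hk3; linarith
          have key : p.eval (t k + Z) / (c k) ^ p.natDegree =
              (p.divX.eval (t k + Z) / (c k) ^ p.divX.natDegree) * ((t k + Z) / c k)
              + p.coeff 0 / (c k) ^ (p.natDegree - 1 + 1) := by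
            rw [heval]
            have : p.natDegree - 1 + 1 = p.natDegree := by omega
            rw [this, hpow k hck, hdiv]
            field_simp
          rw [key]
          have := hk Z hZ
          simpa [hlc] using this
  exact main p.natDegree p le_rfl

/-- UT is preserved by pointwise equality. -/
lemma UT.congr {z₀ : ℂ} {F F' : ℕ → ℂ → ℂ} {L L' : ℂ → ℂ} (h : UT z₀ F L)
    (hF : ∀ k Z, F k Z = F' k Z) (hL : ∀ Z, L Z = L' Z) : UT z₀ F' L' := by
  intro ε hε
  filter_upwards [h ε hε] with k hk Z hZ
  rw [← hF, ← hL]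
  exact hk Z hZ

lemma UT.refl (z₀ : ℂ) (e : ℂ → ℂ) : UT z₀ (fun _ Z => e Z) e := by
  intro ε hε
  filter_upwards with k Z _
  simp [hε.le]

lemma expBound (t : ℝ) (z₀ : ℂ) : ∀ Z ∈ closedBall z₀ 1,
    ‖Complex.exp ((t : ℂ) * Z)‖ ≤ Real.exp (|t| * (‖z₀‖ + 1)) := by
  intro Z hZ
  rw [Complex.norm_exp]
  apply Real.exp_le_exp.mpr
  have h1 : ((t : ℂ) * Z).re = t * Z.re := by simp
  rw [h1]
  have hZb : ‖Z‖ ≤ ‖z₀‖ + 1 := by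
    have := mem_closedBall_iff_norm.mp hZ
    have := norm_sub_norm_le Z z₀
    linarith
  calc t * Z.re ≤ |t * Z.re| := le_abs_self _
    _ = |t| * |Z.re| := abs_mul _ _
    _ ≤ |t| * (‖z₀‖ + 1) := by
        apply mul_le_mul_of_nonneg_left _ (abs_nonneg _)
        exact le_trans (Complex.abs_re_le_norm Z) hZb

theorem stmt_10 (m : ℕ) (s : Fin (m + 2) → ℝ) (hs : StrictMono s)
    (a : Fin (m + 2) → Polynomial ℂ)
    (hah : a 0 ≠ 0) (hal : a (Fin.last (m + 1)) ≠ 0) :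
    {lam : ℂ | (∑ j : Fin (m + 2),
        (a j).eval lam * Complex.exp (-(s j : ℂ) * lam)) = 0}.Infinite := by
  classical
  set d : Fin (m+2) → ℕ := fun j => (a j).natDegree with hd
  have hs0 : ∀ j : Fin (m+2), j ≠ 0 → s 0 < s j := fun j hj => hs (Fin.pos_of_ne_zero hj)
  set q : Fin (m+2) → ℝ := fun j => ((d j : ℝ) - (d 0 : ℝ)) / (s j - s 0) with hq
  set T : Finset (Fin (m+2)) := Finset.univ.filter (fun j => j ≠ 0 ∧ a j ≠ 0) with hT
  have hlast0 : (Fin.last (m+1) : Fin (m+2)) ≠ 0 := by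
    simp [Fin.ext_iff]
  have hlastT : Fin.last (m+1) ∈ T := by
    rw [hT]
    simp [hlast0, hal]
  obtain ⟨js, hjsT, hjsmax⟩ := T.exists_max_image q ⟨_, hlastT⟩
  set σ : ℝ := q js with hσdef
  set E : Finset (Fin (m+2)) := insert 0 (T.filter fun j => q j = σ) with hE
  have h0E : (0 : Fin (m+2)) ∈ E := Finset.mem_insert_self _ _
  have hjsE : js ∈ E := Finset.mem_insert_of_mem (Finset.mem_filter.mpr ⟨hjsT, rfl⟩)
  have hjs0 : js ≠ 0 := by
    have := Finset.mem_filter.mp (hT ▸ hjsT)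
    exact this.2.1
  have haE : ∀ j ∈ E, a j ≠ 0 := by
    intro j hj
    rcases Finset.mem_insert.mp hj with h | h
    · rw [h]; exact hah
    · exact (Finset.mem_filter.mp ((Finset.mem_filter.mp h).1)).2.2
  set γ : Fin (m+2) → ℝ := fun j => (d j : ℝ) - (d 0 : ℝ) - (s j - s 0) * σ with hγdef
  have hγE : ∀ j ∈ E, γ j = 0 := by
    intro j hj
    rcases Finset.mem_insert.mp hj with h | h
    · rw [hγdef, h]; simp
    · have hqj : q j = σ := (Finset.mem_filter.mp h).2
      have hj0 : j ≠ 0 := (Finset.mem_filter.mp ((Finset.mem_filter.mp h).1)).2.1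
      have hsj : s 0 < s j := hs0 j hj0
      have hne' : s j - s 0 ≠ 0 := by linarith
      have hqj2 : ((d j : ℝ) - (d 0 : ℝ)) / (s j - s 0) = σ := by
        simpa [hq] using hqj
      have hqj3 : (d j : ℝ) - (d 0 : ℝ) = σ * (s j - s 0) := (div_eq_iff hne').mp hqj2
      show (d j : ℝ) - (d 0 : ℝ) - (s j - s 0) * σ = 0
      linear_combination hqj3
  have hγneg : ∀ j, j ∉ E → j ≠ 0 → a j ≠ 0 → γ j < 0 := by
    intro j hjE hj0 haj
    have hjT : j ∈ T := by rw [hT]; simp [hj0, haj]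
    have hle : q j ≤ σ := hjsmax j hjT
    have hne : q j ≠ σ := by
      intro h
      exact hjE (Finset.mem_insert_of_mem (Finset.mem_filter.mpr ⟨hjT, h⟩))
    have hlt : q j < σ := lt_of_le_of_ne hle hne
    have hsj : s 0 < s j := hs0 j hj0
    have hlt2 : ((d j : ℝ) - (d 0 : ℝ)) / (s j - s 0) < σ := by
      simpa [hq] using hlt
    rw [div_lt_iff₀ (by linarith : (0:ℝ) < s j - s 0)] at hlt2
    show (d j : ℝ) - (d 0 : ℝ) - (s j - s 0) * σ < 0
    linarith [hlt2, mul_comm σ (s j - s 0)]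
  -- phases and subsequence
  set w0 : ℕ → (Fin (m+2) → ℂ) := fun k j => Complex.exp ((((-(s j - s 0) * ((k:ℝ)+2)) : ℝ) : ℂ) * I) with hw0
  have hw0b : ∀ k, w0 k ∈ closedBall (0 : Fin (m+2) → ℂ) 1 := by
    intro k
    rw [mem_closedBall_zero_iff]
    refine (pi_norm_le_iff_of_nonneg zero_le_one).mpr fun j => ?_
    rw [hw0, Complex.norm_exp_ofReal_mul_I]
  obtain ⟨u, -, φ, hφ, hu⟩ := tendsto_subseq_of_bounded isBounded_closedBall hw0b
  set y : ℕ → ℝ := fun k => ((φ k : ℝ) + 2) with hy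
  have hy2 : ∀ k : ℕ, 2 ≤ y k := fun k => by
    show (2:ℝ) ≤ (φ k : ℝ) + 2
    have : (0:ℝ) ≤ (φ k : ℝ) := Nat.cast_nonneg _
    linarith
  have hyp : ∀ k : ℕ, (0:ℝ) < y k := fun k => lt_of_lt_of_le two_pos (hy2 k)
  have hyk : ∀ k : ℕ, (k : ℝ) + 2 ≤ y k := fun k => by
    show (k : ℝ) + 2 ≤ (φ k : ℝ) + 2
    have : (k : ℝ) ≤ (φ k : ℝ) := Nat.cast_le.mpr (hφ.le_apply)
    linarith
  have hyt : Tendsto y atTop atTop := by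
    apply tendsto_atTop_mono hyk
    apply tendsto_atTop_add_const_right
    exact tendsto_natCast_atTop_atTop
  have huj : ∀ j, Tendsto (fun k => Complex.exp ((((-(s j - s 0) * y k) : ℝ) : ℂ) * I))
      atTop (nhds (u j)) := by
    intro j
    exact ((continuous_apply j).tendsto u).comp hu
  have hunorm : ∀ j, ‖u j‖ = 1 := by
    intro j
    have h1 : Tendsto (fun k => ‖Complex.exp ((((-(s j - s 0) * y k) : ℝ) : ℂ) * I)‖)
        atTop (nhds ‖u j‖) := (continuous_norm.tendsto _).comp (huj j)
    have h2 : (fun k => ‖Complex.exp ((((-(s j - s 0) * y k) : ℝ) : ℂ) * I)‖) = fun _ => 1 := by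
      funext k
      rw [Complex.norm_exp_ofReal_mul_I]
    rw [h2] at h1
    exact tendsto_nhds_unique h1 tendsto_const_nhds
  set Tk : ℕ → ℂ := fun k => ((σ * Real.log (y k) : ℝ) : ℂ) + (y k : ℂ) * I with hTk
  set cc : ℕ → ℂ := fun k => Complex.I * (y k : ℂ) with hccdef
  have hccn : ∀ k : ℕ, ‖cc k‖ = y k := by
    intro k
    rw [hccdef]
    simp [abs_of_pos (hyp k)]
  have hcc0 : ∀ k : ℕ, cc k ≠ 0 := by
    intro k
    rw [hccdef]
    exact mul_ne_zero I_ne_zero (by exact_mod_cast (hyp k).ne')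
  have hcct : Tendsto (fun k => ‖cc k‖) atTop atTop := by
    have : (fun k => ‖cc k‖) = y := funext hccn
    rw [this]; exact hyt
  have hrt : Tendsto (fun k => Tk k / cc k) atTop (nhds 1) := by
    have heq : ∀ k, Tk k / cc k = ((σ * Real.log (y k) : ℝ) : ℂ) / cc k + 1 := by
      intro k
      rw [hTk, hccdef, add_div]
      congr 1
      rw [div_eq_one_iff_eq (mul_ne_zero I_ne_zero (by exact_mod_cast (hyp k).ne'))]
      ring
    simp only [heq]
    have h0 : Tendsto (fun k => ((σ * Real.log (y k) : ℝ) : ℂ) / cc k) atTop (nhds 0) := by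
      rw [tendsto_zero_iff_norm_tendsto_zero]
      have hb : ∀ k, ‖((σ * Real.log (y k) : ℝ) : ℂ) / cc k‖ = |σ| * (|Real.log (y k)| / y k) := by
        intro k
        rw [norm_div, hccn, Complex.norm_real, Real.norm_eq_abs, abs_mul]
        rw [mul_div_assoc]
      simp only [hb]
      rw [show (0:ℝ) = |σ| * 0 by ring]
      apply Tendsto.const_mul
      have hlog : Tendsto (fun x : ℝ => Real.log x / x) atTop (nhds 0) := by
        have := (isLittleO_log_rpow_atTop one_pos).tendsto_div_nhds_zero
        simpa [Real.rpow_one] using this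
      have habs : Tendsto (fun k => Real.log (y k) / y k) atTop (nhds 0) := hlog.comp hyt
      apply Tendsto.congr' _ habs
      filter_upwards with k
      rw [_root_.abs_of_nonneg (Real.log_nonneg (by linarith [hy2 k]))]
    have := h0.add_const 1
    simpa using this
  have utA : ∀ (j : Fin (m+2)) (z₀ : ℂ),
      UT z₀ (fun k Z => (a j).eval (Tk k + Z) / (cc k) ^ (d j)) (fun _ => (a j).leadingCoeff) :=
    fun j z₀ => utPoly z₀ cc Tk hcct hrt (a j)
  set β : Fin (m+2) → ℕ → ℂ :=
    fun j k => (cc k) ^ (d j) * Complex.exp (((-(s j - s 0) : ℝ) : ℂ) * Tk k) / (cc k) ^ (d 0)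
    with hβdef
  have hβkey : ∀ (j : Fin (m+2)) (k : ℕ), β j k = (I ^ (d j) / I ^ (d 0)) * (((y k) ^ (γ j) : ℝ) : ℂ) *
      Complex.exp ((((-(s j - s 0) * y k) : ℝ) : ℂ) * I) := by
    intro j k
    have hy0 := hyp k
    have c3 : Complex.exp (((-(s j - s 0) : ℝ) : ℂ) * Tk k) =
        ((((y k) ^ (-(s j - s 0) * σ) : ℝ)) : ℂ) *
          Complex.exp ((((-(s j - s 0) * y k) : ℝ) : ℂ) * I) := by
      have harg : ((-(s j - s 0) : ℝ) : ℂ) * Tk k =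
          ((-(s j - s 0) * (σ * Real.log (y k)) : ℝ) : ℂ) +
            ((-(s j - s 0) * y k : ℝ) : ℂ) * I := by
        simp only [hTk]
        push_cast
        ring
      rw [harg, Complex.exp_add]
      congr 1
      rw [← Complex.ofReal_exp]
      congr 1
      rw [Real.rpow_def_of_pos hy0]
      ring_nf
    have r2 : ((y k) ^ (d j) : ℝ) * (y k) ^ (-(s j - s 0) * σ) / (y k) ^ (d 0)
        = (y k) ^ (γ j) := by
      rw [← Real.rpow_natCast (y k) (d j), ← Real.rpow_natCast (y k) (d 0),
          ← Real.rpow_add hy0, ← Real.rpow_sub hy0]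
      congr 1
      show (d j : ℝ) + (-(s j - s 0) * σ) - (d 0 : ℝ) = (d j : ℝ) - (d 0 : ℝ) - (s j - s 0) * σ
      ring
    show (cc k) ^ (d j) * Complex.exp (((-(s j - s 0) : ℝ) : ℂ) * Tk k) / (cc k) ^ (d 0) = _
    rw [c3, ← r2, hccdef]
    have hIne : (Complex.I) ^ (d 0) ≠ 0 := pow_ne_zero _ I_ne_zero
    have hyne : ((y k : ℂ)) ^ (d 0) ≠ 0 := pow_ne_zero _ (by exact_mod_cast hy0.ne')
    push_cast
    rw [mul_pow, mul_pow]
    field_simp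
  have hβE : ∀ j ∈ E, Tendsto (β j) atTop (nhds ((I ^ (d j) / I ^ (d 0)) * u j)) := by
    intro j hj
    have heq : β j = fun k => (I ^ (d j) / I ^ (d 0)) *
        Complex.exp ((((-(s j - s 0) * y k) : ℝ) : ℂ) * I) := by
      funext k
      rw [hβkey j k, hγE j hj, Real.rpow_zero]
      simp
    rw [heq]
    exact (huj j).const_mul _
  have hβ0 : ∀ j, j ∉ E → a j ≠ 0 → Tendsto (β j) atTop (nhds 0) := by
    intro j hjE haj
    have hj0 : j ≠ 0 := fun h => hjE (h ▸ h0E)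
    have hγj : γ j < 0 := hγneg j hjE hj0 haj
    rw [tendsto_zero_iff_norm_tendsto_zero]
    have hnorm : ∀ k, ‖β j k‖ = (y k) ^ (γ j) := by
      intro k
      rw [hβkey j k]
      rw [norm_mul, norm_mul, norm_div, norm_pow, norm_pow]
      rw [Complex.norm_I, one_pow, one_pow, div_one, one_mul]
      rw [Complex.norm_exp_ofReal_mul_I, mul_one]
      rw [Complex.norm_real, Real.norm_eq_abs]
      exact abs_of_pos (Real.rpow_pos_of_pos (hyp k) _)
    simp only [hnorm]
    have h1 : Tendsto (fun x : ℝ => x ^ (-(-(γ j)))) atTop (nhds 0) :=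
      tendsto_rpow_neg_atTop (by linarith)
    have := h1.comp hyt
    simpa [Function.comp_def] using this
  set v : Fin (m+2) → ℂ := fun j => (I ^ (d j) / I ^ (d 0)) * u j with hv
  have hvnorm : ∀ j, ‖v j‖ = 1 := by
    intro j
    rw [hv]
    simp only [norm_mul, norm_div, norm_pow]
    rw [Complex.norm_I, one_pow, one_pow, div_one, one_mul, hunorm]
  have hvne : ∀ j, v j ≠ 0 := by
    intro j h
    have := hvnorm j
    rw [h] at this
    simp at this
  set cinf : Fin (m+2) → ℂ := fun j => if j ∈ E then (a j).leadingCoeff * v j else 0 with hcinf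
  -- apply lemB on the subtype E
  obtain ⟨jM, hjME, hjMmax⟩ := E.exists_max_image s ⟨0, h0E⟩
  have hjM0 : jM ≠ 0 := by
    intro h
    have h1 := hjMmax js hjsE
    rw [h] at h1
    exact absurd h1 (not_le.mpr (hs0 js hjs0))
  obtain ⟨zstar, hzstar⟩ := lemB (ι := {x // x ∈ E})
    (fun i => (a i.1).leadingCoeff * v i.1) (fun i => -s i.1)
    ⟨jM, hjME⟩ ⟨0, h0E⟩
    (by
      rintro ⟨j, hj⟩ hne
      have hjne : j ≠ jM := fun h => hne (Subtype.ext h)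
      have := hjMmax j hj
      have : s j < s jM := lt_of_le_of_ne this (fun h => hjne (hs.injective h))
      simpa using this)
    (by
      rintro ⟨j, hj⟩ hne
      have hjne : j ≠ 0 := fun h => hne (Subtype.ext h)
      have := hs0 j hjne
      simpa using this)
    (by
      intro h
      exact hjM0 (congrArg Subtype.val h))
    (mul_ne_zero (leadingCoeff_ne_zero.mpr (haE jM hjME)) (hvne jM))
    (mul_ne_zero (leadingCoeff_ne_zero.mpr hah) (hvne 0))
  set G : ℂ → ℂ := fun Z => ∑ j, cinf j * Complex.exp (((-s j : ℝ) : ℂ) * Z) with hG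
  have hGeq : ∀ Z, G Z = ∑ i : {x // x ∈ E},
      ((a i.1).leadingCoeff * v i.1) * Complex.exp (((-s i.1 : ℝ) : ℂ) * Z) := by
    intro Z
    show (∑ j, cinf j * Complex.exp (((-s j : ℝ) : ℂ) * Z)) = _
    calc (∑ j, cinf j * Complex.exp (((-s j : ℝ) : ℂ) * Z))
        = ∑ j ∈ E, cinf j * Complex.exp (((-s j : ℝ) : ℂ) * Z) := by
          refine (Finset.sum_subset (Finset.subset_univ E) fun j _ hj => ?_).symm
          have : cinf j = 0 := by simp only [hcinf]; rw [if_neg hj]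
          rw [this, zero_mul]
      _ = ∑ j ∈ E, ((a j).leadingCoeff * v j) * Complex.exp (((-s j : ℝ) : ℂ) * Z) := by
          refine Finset.sum_congr rfl fun j hj => ?_
          have : cinf j = (a j).leadingCoeff * v j := by simp only [hcinf]; rw [if_pos hj]
          rw [this]
      _ = ∑ i : {x // x ∈ E}, ((a i.1).leadingCoeff * v i.1) *
            Complex.exp (((-s i.1 : ℝ) : ℂ) * Z) := (Finset.sum_coe_sort E _).symm
  have hGz : G zstar = 0 := by
    rw [hGeq]
    convert hzstar using 2
  have hGd : Differentiable ℂ G := sumDiff cinf (fun j => -s j)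
  have hGwx : ∃ w : ℂ, G w ≠ 0 := by
    obtain ⟨X₂, hX₂⟩ := lemD (ι := {x // x ∈ E})
      (fun i => (a i.1).leadingCoeff * v i.1) (fun i => -s i.1) ⟨0, h0E⟩
      (by
        rintro ⟨j, hj⟩ hne
        have hjne : j ≠ 0 := fun h => hne (Subtype.ext h)
        have := hs0 j hjne
        simpa using this)
      (mul_ne_zero (leadingCoeff_ne_zero.mpr hah) (hvne 0))
    refine ⟨(X₂ : ℂ), ?_⟩
    have h1 := hX₂ (X₂ : ℂ) (by simp)
    intro h
    rw [hGeq] at h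
    rw [show (∑ i : {x // x ∈ E}, (a i.1).leadingCoeff * v i.1 *
        Complex.exp (((-s i.1 : ℝ) : ℂ) * (X₂:ℂ))) = 0 from h] at h1
    simp only [norm_zero] at h1
    have h2 : (0:ℝ) < ‖(a (0 : Fin (m+2))).leadingCoeff * v 0‖ / 2 * Real.exp (-s 0 * (X₂:ℂ).re) := by
      apply mul_pos _ (Real.exp_pos _)
      have := norm_pos_iff.mpr (mul_ne_zero (leadingCoeff_ne_zero.mpr hah) (hvne 0))
      linarith
    linarith
  obtain ⟨w, hGw⟩ := hGwx
  -- the normalized translates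
  set ν : ℕ → ℂ := fun k => (cc k) ^ (d 0) * Complex.exp (((-s 0 : ℝ) : ℂ) * Tk k) with hν
  have hν0 : ∀ k : ℕ, ν k ≠ 0 := fun k =>
    mul_ne_zero (pow_ne_zero _ (hcc0 k)) (Complex.exp_ne_zero _)
  set hf : ℕ → ℂ → ℂ := fun k Z =>
    (∑ j, (a j).eval (Tk k + Z) * Complex.exp (((-s j : ℝ) : ℂ) * (Tk k + Z))) / ν k with hhf
  have hhd : ∀ k : ℕ, Differentiable ℂ (hf k) := by
    intro k
    apply Differentiable.div_const
    apply Differentiable.fun_sum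
    intro j _
    apply Differentiable.mul
    · exact (a j).differentiable.comp ((differentiable_const _).add differentiable_id)
    · apply Complex.differentiable_exp.comp
      exact ((differentiable_const _).add differentiable_id).const_mul _
  have hterm : ∀ (k : ℕ) (Z : ℂ), hf k Z = ∑ j, ((a j).eval (Tk k + Z) / (cc k) ^ (d j)) * β j k *
      Complex.exp (((-s j : ℝ) : ℂ) * Z) := by
    intro k Z
    show (∑ j, (a j).eval (Tk k + Z) * Complex.exp (((-s j : ℝ) : ℂ) * (Tk k + Z))) / ν k = _
    rw [Finset.sum_div]
    refine Finset.sum_congr rfl fun j _ => ?_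
    have hsplit : Complex.exp (((-s j : ℝ) : ℂ) * (Tk k + Z)) =
        Complex.exp (((-(s j - s 0) : ℝ) : ℂ) * Tk k) * Complex.exp (((-s 0 : ℝ) : ℂ) * Tk k) *
          Complex.exp (((-s j : ℝ) : ℂ) * Z) := by
      rw [← Complex.exp_add, ← Complex.exp_add]
      congr 1
      push_cast
      ring
    rw [hsplit]
    simp only [hβdef, hν]
    have h1 : ((cc k) ^ (d j) : ℂ) ≠ 0 := pow_ne_zero _ (hcc0 k)
    have h2 : ((cc k) ^ (d 0) : ℂ) ≠ 0 := pow_ne_zero _ (hcc0 k)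
    have h3 : Complex.exp (((-s 0 : ℝ) : ℂ) * Tk k) ≠ 0 := Complex.exp_ne_zero _
    field_simp
  have hUT : UT zstar hf G := by
    have hper : ∀ j : Fin (m+2), UT zstar
        (fun k Z => ((a j).eval (Tk k + Z) / (cc k) ^ (d j)) * β j k *
          Complex.exp (((-s j : ℝ) : ℂ) * Z))
        (fun Z => cinf j * Complex.exp (((-s j : ℝ) : ℂ) * Z)) := by
      intro j
      by_cases haj : a j = 0
      · intro ε hε
        filter_upwards with k Z hZ
        have h1 : (a j).eval (Tk k + Z) = 0 := by rw [haj]; simp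
        have h2 : cinf j = 0 := by
          have hjE : j ∉ E := fun hj => haE j hj haj
          simp only [hcinf]
          rw [if_neg hjE]
        rw [h1, h2]
        simp [hε.le]
      · by_cases hjE : j ∈ E
        · have hmul1 := UT.mul (utA j zstar) (UT.of_tendsto (hβE j hjE))
            (fun Z _ => le_refl ‖(a j).leadingCoeff‖) (fun Z _ => le_of_eq (hvnorm j))
          have hmul2 := UT.mul hmul1
            (UT.refl zstar (fun Z => Complex.exp (((-s j : ℝ) : ℂ) * Z)))
            (fun Z _ => by
              rw [norm_mul, hvnorm, mul_one])
            (expBound (-s j) zstar)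
          refine hmul2.congr (fun k Z => rfl) (fun Z => ?_)
          have : cinf j = (a j).leadingCoeff * v j := by
            simp only [hcinf]; rw [if_pos hjE]
          rw [this]
        · have hmul1 := UT.mul (utA j zstar) (UT.of_tendsto (hβ0 j hjE haj))
            (fun Z _ => le_refl ‖(a j).leadingCoeff‖)
            (fun Z _ => by rw [norm_zero])
          have hmul2 := UT.mul hmul1
            (UT.refl zstar (fun Z => Complex.exp (((-s j : ℝ) : ℂ) * Z)))
            (fun Z _ => by rw [mul_zero, norm_zero])
            (expBound (-s j) zstar)
          refine hmul2.congr (fun k Z => rfl) (fun Z => ?_)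
          have hc0 : cinf j = 0 := by
            simp only [hcinf]; rw [if_neg hjE]
          simp [hc0]
    have hsum := UT.sum Finset.univ _ _ (fun j _ => hper j)
    exact hsum.congr (fun k Z => (hterm k Z).symm) (fun Z => rfl)
  have hev := lemC hGd hGz hGw hhd hUT
  rw [eventually_atTop] at hev
  obtain ⟨K, hK⟩ := hev
  -- conclude infinitude
  by_contra hfin
  rw [Set.not_infinite] at hfin
  have hbdd : BddAbove (Complex.im '' {lam : ℂ | (∑ j : Fin (m + 2),
      (a j).eval lam * Complex.exp (-(s j : ℂ) * lam)) = 0}) := (hfin.image _).bddAbove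
  obtain ⟨B, hB⟩ := hbdd
  set k : ℕ := K + ⌈|B| + ‖zstar‖⌉₊ with hk
  obtain ⟨Z, hZball, hZzero⟩ := hK k (Nat.le_add_right _ _)
  have hmem : (Tk k + Z) ∈ {lam : ℂ | (∑ j : Fin (m + 2),
      (a j).eval lam * Complex.exp (-(s j : ℂ) * lam)) = 0} := by
    have h1 : (∑ j, (a j).eval (Tk k + Z) * Complex.exp (((-s j : ℝ) : ℂ) * (Tk k + Z))) = 0 := by
      have := hZzero
      rw [hhf] at this
      exact (div_eq_zero_iff.mp this).resolve_right (hν0 k)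
    rw [Set.mem_setOf_eq, ← h1]
    apply Finset.sum_congr rfl
    intro j _
    congr 2
    push_cast
    ring
  have him : B < (Tk k + Z).im := by
    have h1 : (Tk k + Z).im = y k + Z.im := by
      rw [hTk]
      simp
    have h2 : |Z.im - zstar.im| ≤ 1 := by
      have := mem_closedBall_iff_norm.mp hZball
      calc |Z.im - zstar.im| = |(Z - zstar).im| := by simp
        _ ≤ ‖Z - zstar‖ := Complex.abs_im_le_norm _
        _ ≤ 1 := this
    have h3 : |zstar.im| ≤ ‖zstar‖ := Complex.abs_im_le_norm _
    have h4 : (k : ℝ) + 2 ≤ y k := hyk k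
    have h5 : (|B| + ‖zstar‖ : ℝ) ≤ ⌈|B| + ‖zstar‖⌉₊ := Nat.le_ceil _
    have h6 : ((K : ℝ) + ⌈|B| + ‖zstar‖⌉₊) = (k : ℝ) := by
      rw [hk]
      push_cast
      ring
    have h7 : (|B| + ‖zstar‖ : ℝ) ≤ (k:ℝ) := by
      rw [← h6]
      have : (0:ℝ) ≤ (K:ℝ) := Nat.cast_nonneg _
      linarith
    have h8 : B ≤ |B| := le_abs_self B
    rw [h1]
    have h9 : -1 - ‖zstar‖ ≤ Z.im := by
      rw [abs_le] at h2
      have := neg_abs_le zstar.im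
      linarith
    linarith
  have := hB (Set.mem_image_of_mem _ hmem)
  linarith
end

section
/- Suppose a_h, a_l are nonzero complex polynomials, s > 0 is real, intermediate polynomial terms b_j(λ)e^{−s_j λ} have 0 < s_j < s, and there exist a polynomial g and c ∈ ℂ with a_h(λ) + Σ_j b_j(λ)e^{−s_j λ} + a_l(λ)e^{−sλ} = g(λ)e^{cλ} for all λ ∈ ℂ. Then c = −s, and consequently a_h is identically zero, a contradiction; hence no such g and c exist. -/
open Filter Topology Polynomial

private lemma real_lem {a : ℝ} (ha : a < 0) (k : ℕ) :
    Tendsto (fun t : ℝ => t ^ k * Real.exp (a * t)) atTop (𝓝 0) := by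
  have h1 : Tendsto (fun t : ℝ => (-a) * t) atTop atTop :=
    Filter.Tendsto.const_mul_atTop (by linarith) tendsto_id
  have h2 := (Real.tendsto_pow_mul_exp_neg_atTop_nhds_zero k).comp h1
  have h3 : Tendsto (fun t : ℝ => ((-a) ^ k)⁻¹ * (((-a) * t) ^ k * Real.exp (-((-a) * t))))
      atTop (𝓝 0) := by simpa using h2.const_mul (((-a) ^ k)⁻¹)
  refine h3.congr' ?_
  filter_upwards with t
  have hak : (-a) ^ k ≠ 0 := pow_ne_zero _ (by linarith)
  field_simp [mul_pow]
  ring_nf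

/-- polynomial times decaying exponential tends to 0 along reals. -/
private lemma lemB_s11 (p : Polynomial ℂ) {z : ℂ} (hz : z.re < 0) :
    Tendsto (fun t : ℝ => p.eval (t : ℂ) * Complex.exp (z * t)) atTop (𝓝 0) := by
  have main : ∀ k : ℕ, Tendsto (fun t : ℝ => (t : ℂ) ^ k * Complex.exp (z * t)) atTop (𝓝 0) := by
    intro k
    rw [tendsto_zero_iff_norm_tendsto_zero]
    have hcongr : ∀ᶠ t : ℝ in atTop,
        ‖(t : ℂ) ^ k * Complex.exp (z * t)‖ = t ^ k * Real.exp (z.re * t) := by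
      filter_upwards [eventually_ge_atTop (0:ℝ)] with t ht
      rw [norm_mul, norm_pow, Complex.norm_exp]
      simp [Complex.norm_real, abs_of_nonneg ht, Complex.mul_re]
    rw [tendsto_congr' hcongr]
    exact real_lem hz k
  have : (fun t : ℝ => p.eval (t : ℂ) * Complex.exp (z * t)) =
      fun t : ℝ => ∑ k ∈ Finset.range (p.natDegree + 1),
        p.coeff k * ((t : ℂ) ^ k * Complex.exp (z * t)) := by
    funext t
    rw [Polynomial.eval_eq_sum_range, Finset.sum_mul]
    congr 1; funext k; ring
  rw [this]
  have := tendsto_finset_sum (Finset.range (p.natDegree + 1))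
    (fun k _ => ((main k).const_mul (p.coeff k)))
  simpa using this

/-- a complex polynomial tending to 0 along the reals is 0. -/
private lemma lemA_s11 (p : Polynomial ℂ) (h : Tendsto (fun t : ℝ => p.eval (t : ℂ)) atTop (𝓝 0)) :
    p = 0 := by
  by_contra hp
  set n := p.natDegree with hn
  -- h1 : eval / t^n → leadingCoeff
  have h1 : Tendsto (fun t : ℝ => p.eval (t : ℂ) / (t : ℂ) ^ n) atTop (𝓝 p.leadingCoeff) := by
    have key : ∀ᶠ t : ℝ in atTop, p.eval (t : ℂ) / (t : ℂ) ^ n =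
        (∑ k ∈ Finset.range n, p.coeff k * ((t : ℂ) ^ k / (t : ℂ) ^ n)) + p.leadingCoeff := by
      filter_upwards [eventually_ge_atTop (1:ℝ)] with t ht
      have htne : (t : ℂ) ≠ 0 := by
        simp only [ne_eq, Complex.ofReal_eq_zero]; linarith
      rw [Polynomial.eval_eq_sum_range, Finset.sum_range_succ, add_div, Finset.sum_div]
      rw [← hn, Polynomial.coeff_natDegree, mul_div_assoc, div_self (pow_ne_zero _ htne), mul_one]
      congr 1; apply Finset.sum_congr rfl; intro k _; ring
    rw [tendsto_congr' key]
    have hsum : Tendsto (fun t : ℝ => ∑ k ∈ Finset.range n,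
        p.coeff k * ((t : ℂ) ^ k / (t : ℂ) ^ n)) atTop (𝓝 0) := by
      have : (0:ℂ) = ∑ k ∈ Finset.range n, 0 := by simp
      rw [this]
      apply tendsto_finset_sum
      intro k hk
      rw [Finset.mem_range] at hk
      apply squeeze_zero_norm' (a := fun t : ℝ => ‖p.coeff k‖ * t⁻¹)
      · filter_upwards [eventually_ge_atTop (1:ℝ)] with t ht
        have ht0 : (0:ℝ) < t := by linarith
        rw [norm_mul, norm_div, norm_pow, norm_pow, Complex.norm_real, Real.norm_eq_abs,
          abs_of_nonneg ht0.le]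
        gcongr
        rw [div_le_iff₀ (pow_pos ht0 n), inv_mul_eq_div, le_div_iff₀ ht0, ← pow_succ]
        exact pow_le_pow_right₀ ht hk
      · simpa using tendsto_inv_atTop_zero.const_mul ‖p.coeff k‖
    simpa using hsum.add (tendsto_const_nhds (x := p.leadingCoeff))
  -- h2 : eval / t^n → 0
  have h2 : Tendsto (fun t : ℝ => p.eval (t : ℂ) / (t : ℂ) ^ n) atTop (𝓝 0) := by
    apply squeeze_zero_norm' (a := fun t : ℝ => ‖p.eval (t : ℂ)‖)
    · filter_upwards [eventually_ge_atTop (1:ℝ)] with t ht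
      rw [norm_div, norm_pow, Complex.norm_real, Real.norm_eq_abs, abs_of_nonneg (by linarith)]
      apply div_le_self (norm_nonneg _)
      exact one_le_pow₀ ht
    · simpa using h.norm
  have := tendsto_nhds_unique h1 h2
  exact hp (Polynomial.leadingCoeff_eq_zero.mp this)

theorem stmt_11 (ah al : Polynomial ℂ) (hah : ah ≠ 0) (hal : al ≠ 0)
    (s : ℝ) (hs : 0 < s) (m : ℕ) (b : Fin m → Polynomial ℂ)
    (sj : Fin m → ℝ) (hsj : ∀ j, 0 < sj j ∧ sj j < s) :
    ¬ ∃ (g : Polynomial ℂ) (c : ℂ), ∀ lam : ℂ,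
      ah.eval lam + (∑ j : Fin m, (b j).eval lam * Complex.exp (-(sj j : ℂ) * lam))
        + al.eval lam * Complex.exp (-(s : ℂ) * lam)
      = g.eval lam * Complex.exp (c * lam) := by
  rintro ⟨g, c, h⟩
  -- sum of intermediate terms tends to 0 at +∞
  have hsumB : Tendsto (fun t : ℝ =>
      ∑ j : Fin m, (b j).eval (t:ℂ) * Complex.exp (-(sj j : ℂ) * t)) atTop (𝓝 0) := by
    have : (0:ℂ) = ∑ j : Fin m, 0 := by simp
    rw [this]
    exact tendsto_finset_sum _ (fun j _ => lemB_s11 (b j) (by simpa using (hsj j).1))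
  have halB : Tendsto (fun t : ℝ => al.eval (t:ℂ) * Complex.exp (-(s : ℂ) * t)) atTop (𝓝 0) :=
    lemB_s11 al (by simpa using hs)
  -- if g * exp(c·) → 0 at +∞ then contradiction (ah = 0)
  have claim1 : ¬ Tendsto (fun t : ℝ => g.eval (t:ℂ) * Complex.exp (c * t)) atTop (𝓝 0) := by
    intro hg
    apply hah
    apply lemA_s11
    have : (fun t : ℝ => ah.eval (t:ℂ)) = fun t : ℝ =>
        g.eval (t:ℂ) * Complex.exp (c * t)
        - (∑ j : Fin m, (b j).eval (t:ℂ) * Complex.exp (-(sj j : ℂ) * t))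
        - al.eval (t:ℂ) * Complex.exp (-(s : ℂ) * t) := by
      funext t; linear_combination h (t:ℂ)
    rw [this]
    simpa using (hg.sub hsumB).sub halB
  rcases lt_trichotomy c.re 0 with hc | hc | hc
  · exact claim1 (lemB_s11 g hc)
  · -- c.re = 0 : show al = 0 using behaviour at -∞
    apply hal
    have hrefl : al.comp (-Polynomial.X) = 0 := by
      apply lemA_s11
      have key : ∀ t : ℝ, (al.comp (-Polynomial.X)).eval (t:ℂ) =
          (g.comp (-Polynomial.X)).eval (t:ℂ) * Complex.exp ((-c - s) * t)
          - (ah.comp (-Polynomial.X)).eval (t:ℂ) * Complex.exp (-(s:ℂ) * t)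
          - ∑ j : Fin m, ((b j).comp (-Polynomial.X)).eval (t:ℂ)
              * Complex.exp (((sj j : ℂ) - s) * t) := by
        intro t
        simp only [Polynomial.eval_comp, Polynomial.eval_neg, Polynomial.eval_X]
        have h' := h (-(t:ℂ))
        have e1 : Complex.exp ((-c - s) * t) = Complex.exp (c * -(t:ℂ)) * Complex.exp (-(s:ℂ) * t) := by
          rw [← Complex.exp_add]; ring_nf
        have e2 : ∀ j : Fin m, Complex.exp (((sj j : ℂ) - s) * t)
            = Complex.exp (-(sj j : ℂ) * -(t:ℂ)) * Complex.exp (-(s:ℂ) * t) := by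
          intro j; rw [← Complex.exp_add]; ring_nf
        have e3 : Complex.exp (-(s:ℂ) * -(t:ℂ)) * Complex.exp (-(s:ℂ) * t) = 1 := by
          rw [← Complex.exp_add]; ring_nf; exact Complex.exp_zero
        simp only [e1, e2]
        rw [Finset.sum_congr rfl (fun j _ => by ring :
          ∀ j ∈ Finset.univ, ((b j).eval (-(t:ℂ))) * (Complex.exp (-(sj j:ℂ) * -(t:ℂ)) * Complex.exp (-(s:ℂ)*t))
            = ((b j).eval (-(t:ℂ)) * Complex.exp (-(sj j:ℂ) * -(t:ℂ))) * Complex.exp (-(s:ℂ)*t)),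
          ← Finset.sum_mul]
        linear_combination Complex.exp (-(s:ℂ) * t) * h' - al.eval (-(t:ℂ)) * e3
      have hgB : Tendsto (fun t : ℝ => (g.comp (-Polynomial.X)).eval (t:ℂ)
          * Complex.exp ((-c - s) * t)) atTop (𝓝 0) :=
        lemB_s11 _ (by simp [hc, hs])
      have hahB : Tendsto (fun t : ℝ => (ah.comp (-Polynomial.X)).eval (t:ℂ)
          * Complex.exp (-(s:ℂ) * t)) atTop (𝓝 0) := lemB_s11 _ (by simpa using hs)
      have hbB : Tendsto (fun t : ℝ => ∑ j : Fin m, ((b j).comp (-Polynomial.X)).eval (t:ℂ)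
          * Complex.exp (((sj j : ℂ) - s) * t)) atTop (𝓝 0) := by
        have : (0:ℂ) = ∑ j : Fin m, 0 := by simp
        rw [this]
        refine tendsto_finset_sum _ (fun j _ => lemB_s11 _ ?_)
        have := (hsj j).2
        simp only [Complex.sub_re, Complex.ofReal_re]
        linarith
      have : (fun t : ℝ => (al.comp (-Polynomial.X)).eval (t:ℂ)) = fun t : ℝ =>
          (g.comp (-Polynomial.X)).eval (t:ℂ) * Complex.exp ((-c - s) * t)
          - (ah.comp (-Polynomial.X)).eval (t:ℂ) * Complex.exp (-(s:ℂ) * t)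
          - ∑ j : Fin m, ((b j).comp (-Polynomial.X)).eval (t:ℂ)
              * Complex.exp (((sj j : ℂ) - s) * t) := funext key
      rw [this]
      simpa using (hgB.sub hahB).sub hbB
    have : (al.comp (-Polynomial.X)).comp (-Polynomial.X) = al := by
      rw [Polynomial.comp_assoc]
      simp
    rw [← this, hrefl, Polynomial.zero_comp]
  · -- c.re > 0 : show g = 0, then contradiction via claim1
    have hg0 : g = 0 := by
      apply lemA_s11
      have key : ∀ t : ℝ, g.eval (t:ℂ) =
          ah.eval (t:ℂ) * Complex.exp (-c * t)
          + (∑ j : Fin m, (b j).eval (t:ℂ) * Complex.exp ((-(sj j : ℂ) - c) * t))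
          + al.eval (t:ℂ) * Complex.exp ((-(s:ℂ) - c) * t) := by
        intro t
        have h' := h (t:ℂ)
        have e1 : Complex.exp (c * (t:ℂ)) * Complex.exp (-c * t) = 1 := by
          rw [← Complex.exp_add]; ring_nf; exact Complex.exp_zero
        have e2 : ∀ j : Fin m, Complex.exp ((-(sj j : ℂ) - c) * t)
            = Complex.exp (-(sj j : ℂ) * t) * Complex.exp (-c * t) := by
          intro j; rw [← Complex.exp_add]; ring_nf
        have e3 : Complex.exp ((-(s:ℂ) - c) * t)
            = Complex.exp (-(s:ℂ) * t) * Complex.exp (-c * t) := by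
          rw [← Complex.exp_add]; ring_nf
        simp only [e2, e3]
        rw [Finset.sum_congr rfl (fun j _ => by ring :
          ∀ j ∈ Finset.univ, ((b j).eval (t:ℂ)) * (Complex.exp (-(sj j:ℂ) * t) * Complex.exp (-c*t))
            = ((b j).eval (t:ℂ) * Complex.exp (-(sj j:ℂ) * t)) * Complex.exp (-c*t)),
          ← Finset.sum_mul]
        linear_combination -(Complex.exp (-c * (t:ℂ)) * h') - g.eval (t:ℂ) * e1
      have hahB : Tendsto (fun t : ℝ => ah.eval (t:ℂ) * Complex.exp (-c * t)) atTop (𝓝 0) :=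
        lemB_s11 _ (by simpa using hc)
      have hbB : Tendsto (fun t : ℝ => ∑ j : Fin m, (b j).eval (t:ℂ)
          * Complex.exp ((-(sj j : ℂ) - c) * t)) atTop (𝓝 0) := by
        have : (0:ℂ) = ∑ j : Fin m, 0 := by simp
        rw [this]
        refine tendsto_finset_sum _ (fun j _ => lemB_s11 _ ?_)
        have := (hsj j).1
        simp only [Complex.sub_re, Complex.neg_re, Complex.ofReal_re]
        linarith
      have halB' : Tendsto (fun t : ℝ => al.eval (t:ℂ) * Complex.exp ((-(s:ℂ) - c) * t))
          atTop (𝓝 0) := by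
        refine lemB_s11 _ ?_
        simp only [Complex.sub_re, Complex.neg_re, Complex.ofReal_re]
        linarith
      have : (fun t : ℝ => g.eval (t:ℂ)) = fun t : ℝ =>
          ah.eval (t:ℂ) * Complex.exp (-c * t)
          + (∑ j : Fin m, (b j).eval (t:ℂ) * Complex.exp ((-(sj j : ℂ) - c) * t))
          + al.eval (t:ℂ) * Complex.exp ((-(s:ℂ) - c) * t) := funext key
      rw [this]
      simpa using (hahB.add hbB).add halB'
    apply claim1
    rw [hg0]
    simp only [Polynomial.eval_zero, zero_mul]
    exact tendsto_const_nhds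
end

section
/- Let M : [0,τ] → ℂ be continuous with τ > 0. If there exist p, q ∈ ℂ with ∫₀^τ M(θ)e^{−λθ} dθ = pλ + q for all λ ∈ ℂ, then M is identically zero (and p = q = 0). -/
set_option maxHeartbeats 1000000

open MeasureTheory Complex Polynomial intervalIntegral Filter

theorem stmt_15 (τ : ℝ) (hτ : 0 < τ) (M : ℝ → ℂ)
    (hM : ContinuousOn M (Set.Icc 0 τ)) (p q : ℂ)
    (h : ∀ lam : ℂ, (∫ θ in (0 : ℝ)..τ, M θ * Complex.exp (-lam * θ)) = p * lam + q) :
    (∀ θ ∈ Set.Icc (0 : ℝ) τ, M θ = 0) ∧ p = 0 ∧ q = 0 := by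
  have hIcc : Set.uIcc (0:ℝ) τ = Set.Icc 0 τ := Set.uIcc_of_le hτ.le
  -- bound on M
  obtain ⟨C, hC⟩ := isCompact_Icc.exists_bound_of_continuousOn hM
  have hC0 : 0 ≤ C := le_trans (norm_nonneg _) (hC 0 ⟨le_refl 0, hτ.le⟩)
  -- integrability helper
  have hint : ∀ f : ℝ → ℂ, Continuous f →
      IntervalIntegrable (fun θ => M θ * f θ) volume 0 τ := by
    intro f hf
    apply ContinuousOn.intervalIntegrable
    rw [hIcc]
    exact hM.mul hf.continuousOn
  -- the elementary exponential integral bound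
  have hexpint : ∀ t : ℝ, 0 < t → (∫ θ in (0:ℝ)..τ, Real.exp (-t * θ)) ≤ 1 / t := by
    intro t ht
    rw [integral_comp_mul_left (fun u => Real.exp u) (by linarith : -t ≠ 0), integral_exp]
    have h1 : Real.exp (-t * τ) ≤ 1 := Real.exp_le_one_iff.mpr (by nlinarith)
    have h2 : (0:ℝ) < Real.exp (-t*τ) := Real.exp_pos _
    rw [mul_zero, Real.exp_zero, smul_eq_mul]
    have e1 : (-t)⁻¹ * (Real.exp (-t * τ) - 1) = t⁻¹ * (1 - Real.exp (-t*τ)) := by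
      rw [inv_neg]; ring
    rw [e1, div_eq_inv_mul]
    have : t⁻¹ * (1 - Real.exp (-t*τ)) ≤ t⁻¹ * 1 :=
      mul_le_mul_of_nonneg_left (by linarith) (by positivity)
    linarith
  -- decay estimate
  have key : ∀ t : ℝ, 0 < t → ‖p * (t:ℂ) + q‖ ≤ C / t := by
    intro t ht
    rw [← h t]
    have hb : ∀ θ ∈ Set.uIoc (0:ℝ) τ,
        ‖M θ * Complex.exp (-(t:ℂ) * θ)‖ ≤ C * Real.exp (-t * θ) := by
      intro θ hθ
      have hθ' : θ ∈ Set.Icc (0:ℝ) τ := by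
        rw [Set.uIoc_of_le hτ.le] at hθ; exact ⟨hθ.1.le, hθ.2⟩
      rw [norm_mul]
      have e2 : (-(t:ℂ) * θ) = ((-t * θ : ℝ) : ℂ) := by push_cast; ring
      have e3 : ‖Complex.exp (-(t:ℂ) * θ)‖ = Real.exp (-t * θ) := by
        rw [e2, Complex.norm_exp, Complex.ofReal_re]
      rw [e3]
      exact mul_le_mul_of_nonneg_right (hC θ hθ') (Real.exp_pos _).le
    calc ‖∫ θ in (0:ℝ)..τ, M θ * Complex.exp (-(t:ℂ) * θ)‖
        ≤ |∫ θ in (0:ℝ)..τ, C * Real.exp (-t * θ)| := by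
          apply intervalIntegral.norm_integral_le_abs_of_norm_le
          · exact (ae_restrict_iff' measurableSet_uIoc).mpr (MeasureTheory.ae_of_all _ hb)
          · exact (continuous_const.mul
              (Real.continuous_exp.comp (continuous_const.mul continuous_id))).intervalIntegrable 0 τ
      _ = ∫ θ in (0:ℝ)..τ, C * Real.exp (-t * θ) :=
          abs_of_nonneg (intervalIntegral.integral_nonneg hτ.le (fun u _ => by positivity))
      _ = C * ∫ θ in (0:ℝ)..τ, Real.exp (-t * θ) := by rw [intervalIntegral.integral_const_mul]
      _ ≤ C * (1 / t) := mul_le_mul_of_nonneg_left (hexpint t ht) hC0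
      _ = C / t := by ring
  -- p = 0
  have hp : p = 0 := by
    have hbound : ∀ᶠ t : ℝ in atTop, ‖p‖ ≤ C / t^2 + ‖q‖ / t := by
      filter_upwards [eventually_gt_atTop 0] with t ht
      have h1 := key t ht
      have h2 : ‖p‖ * t ≤ C / t + ‖q‖ := by
        have : ‖p * (t:ℂ)‖ ≤ ‖p * t + q‖ + ‖q‖ := by
          calc ‖p * (t:ℂ)‖ = ‖(p * t + q) + (-q)‖ := by ring_nf
            _ ≤ ‖p * t + q‖ + ‖-q‖ := norm_add_le _ _
            _ = ‖p * t + q‖ + ‖q‖ := by rw [norm_neg]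
        rw [norm_mul, Complex.norm_real, Real.norm_eq_abs, abs_of_pos ht] at this
        linarith
      rw [← le_div_iff₀ ht] at h2
      have e4 : (C / t + ‖q‖) / t = C / t^2 + ‖q‖ / t := by field_simp
      linarith [e4 ▸ h2]
    have hlim : Tendsto (fun t : ℝ => C / t^2 + ‖q‖ / t) atTop (nhds 0) := by
      have l1 : Tendsto (fun t : ℝ => C / t^2) atTop (nhds 0) :=
        tendsto_const_nhds.div_atTop (tendsto_pow_atTop two_ne_zero)
      have l2 : Tendsto (fun t : ℝ => ‖q‖ / t) atTop (nhds 0) :=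
        tendsto_const_nhds.div_atTop tendsto_id
      simpa using l1.add l2
    have : ‖p‖ ≤ 0 := ge_of_tendsto hlim hbound
    simpa using le_antisymm this (norm_nonneg p)
  -- q = 0
  have hq : q = 0 := by
    have hbound : ∀ᶠ t : ℝ in atTop, ‖q‖ ≤ C / t := by
      filter_upwards [eventually_gt_atTop 0] with t ht
      have h1 := key t ht
      rw [hp, zero_mul, zero_add] at h1
      exact h1
    have hlim : Tendsto (fun t : ℝ => C / t) atTop (nhds 0) :=
      tendsto_const_nhds.div_atTop tendsto_id
    have : ‖q‖ ≤ 0 := ge_of_tendsto hlim hbound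
    simpa using le_antisymm this (norm_nonneg q)
  -- all integrals vanish
  have h0 : ∀ lam : ℂ, (∫ θ in (0:ℝ)..τ, M θ * Complex.exp (-lam * θ)) = 0 := by
    intro lam; rw [h lam, hp, hq]; ring
  -- moments vanish
  have hmom : ∀ n : ℕ, (∫ θ in (0:ℝ)..τ, M θ * ((Real.exp (-θ) : ℝ) : ℂ)^n) = 0 := by
    intro n
    have e5 : ∀ θ : ℝ, Complex.exp (-(n:ℂ) * θ) = ((Real.exp (-θ) : ℝ) : ℂ)^n := by
      intro θ
      rw [Complex.ofReal_exp, ← Complex.exp_nat_mul]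
      congr 1
      push_cast; ring
    rw [← h0 (n : ℂ)]
    apply intervalIntegral.integral_congr
    intro θ _
    show M θ * ((Real.exp (-θ) : ℝ) : ℂ)^n = M θ * Complex.exp (-(n:ℂ) * θ)
    rw [e5 θ]
  -- polynomial moments vanish
  have hpoly : ∀ P : Polynomial ℝ,
      (∫ θ in (0:ℝ)..τ, M θ * ((P.eval (Real.exp (-θ)) : ℝ) : ℂ)) = 0 := by
    intro P
    have e5 : ∀ θ : ℝ, M θ * ((P.eval (Real.exp (-θ)) : ℝ) : ℂ) =
        ∑ i ∈ Finset.range (P.natDegree + 1),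
          ((P.coeff i : ℂ)) * (M θ * ((Real.exp (-θ) : ℝ) : ℂ)^i) := by
      intro θ
      rw [Polynomial.eval_eq_sum_range]
      push_cast
      rw [Finset.mul_sum]
      apply Finset.sum_congr rfl
      intro i _; ring
    simp_rw [e5]
    rw [intervalIntegral.integral_finset_sum]
    · apply Finset.sum_eq_zero
      intro i _
      rw [intervalIntegral.integral_const_mul, hmom i, mul_zero]
    · intro i _
      apply IntervalIntegrable.const_mul
      exact hint _ (((Complex.continuous_ofReal.comp
        (Real.continuous_exp.comp continuous_neg))).pow i)
  -- Stone-Weierstrass setup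
  set X := Set.Icc (0:ℝ) τ
  have : CompactSpace X := isCompact_iff_compactSpace.mp isCompact_Icc
  let ψ : C(X, ℝ) := ⟨fun x => Real.exp (-(x:ℝ)),
    Real.continuous_exp.comp (continuous_neg.comp continuous_subtype_val)⟩
  have hsep : (Algebra.adjoin ℝ ({ψ} : Set C(X, ℝ))).SeparatesPoints := by
    intro x y hxy
    exact ⟨⇑ψ, Set.mem_image_of_mem _ (Algebra.subset_adjoin (Set.mem_singleton ψ)),
      fun heq => hxy (Subtype.ext (neg_injective (Real.exp_injective heq)))⟩
  let f1 : C(X, ℝ) := ⟨fun x => (M x).re, Complex.continuous_re.comp hM.restrict⟩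
  let f2 : C(X, ℝ) := ⟨fun x => (M x).im, Complex.continuous_im.comp hM.restrict⟩
  -- key: the L² norm integral vanishes
  have hJ : (∫ θ in (0:ℝ)..τ, Complex.normSq (M θ)) = 0 := by
    set J := ∫ θ in (0:ℝ)..τ, Complex.normSq (M θ) with hJdef
    have hJc : ((J : ℝ) : ℂ) = ∫ θ in (0:ℝ)..τ, M θ * (starRingEnd ℂ) (M θ) := by
      rw [hJdef, ← intervalIntegral.integral_ofReal]
      apply intervalIntegral.integral_congr
      intro θ _
      exact (Complex.mul_conj (M θ)).symm
    have hJnonneg : 0 ≤ J :=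
      intervalIntegral.integral_nonneg hτ.le (fun u _ => Complex.normSq_nonneg _)
    have hJle : ∀ ε : ℝ, 0 < ε → J ≤ 2 * C * τ * ε := by
      intro ε hε
      obtain ⟨g1, hg1⟩ := ContinuousMap.exists_mem_subalgebra_near_continuousMap_of_separatesPoints
        (Algebra.adjoin ℝ ({ψ} : Set C(X, ℝ))) hsep f1 ε hε
      obtain ⟨g2, hg2⟩ := ContinuousMap.exists_mem_subalgebra_near_continuousMap_of_separatesPoints
        (Algebra.adjoin ℝ ({ψ} : Set C(X, ℝ))) hsep f2 ε hε
      have hg1m : (g1 : C(X, ℝ)) ∈ (Polynomial.aeval (R := ℝ) ψ).range := by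
        rw [← Algebra.adjoin_singleton_eq_range_aeval]; exact g1.2
      have hg2m : (g2 : C(X, ℝ)) ∈ (Polynomial.aeval (R := ℝ) ψ).range := by
        rw [← Algebra.adjoin_singleton_eq_range_aeval]; exact g2.2
      obtain ⟨P1, hP1⟩ := hg1m
      obtain ⟨P2, hP2⟩ := hg2m
      let G : ℝ → ℂ := fun θ =>
        ((P1.eval (Real.exp (-θ)) : ℝ) : ℂ) - Complex.I * ((P2.eval (Real.exp (-θ)) : ℝ) : ℂ)
      have hc1 : Continuous fun θ : ℝ => ((P1.eval (Real.exp (-θ)) : ℝ) : ℂ) :=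
        Complex.continuous_ofReal.comp
          (P1.continuous.comp (Real.continuous_exp.comp continuous_neg))
      have hc2 : Continuous fun θ : ℝ => ((P2.eval (Real.exp (-θ)) : ℝ) : ℂ) :=
        Complex.continuous_ofReal.comp
          (P2.continuous.comp (Real.continuous_exp.comp continuous_neg))
      have hGcont : Continuous G := hc1.sub (continuous_const.mul hc2)
      have hG0 : (∫ θ in (0:ℝ)..τ, M θ * G θ) = 0 := by
        have e6 : ∀ θ : ℝ, M θ * G θ =
            M θ * ((P1.eval (Real.exp (-θ)) : ℝ) : ℂ)
            - Complex.I * (M θ * ((P2.eval (Real.exp (-θ)) : ℝ) : ℂ)) := by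
          intro θ; simp only [G]; ring
        simp_rw [e6]
        rw [intervalIntegral.integral_sub (hint _ hc1) ((hint _ hc2).const_mul _)]
        rw [intervalIntegral.integral_const_mul, hpoly P1, hpoly P2, mul_zero, sub_zero]
      -- pointwise approximation
      have happrox : ∀ θ ∈ Set.Icc (0:ℝ) τ, ‖(starRingEnd ℂ) (M θ) - G θ‖ ≤ 2 * ε := by
        intro θ hθ
        set x : X := ⟨θ, hθ⟩
        have hP1' : (Polynomial.aeval (R := ℝ) ψ) P1 = (g1 : C(X, ℝ)) := hP1
        have hP2' : (Polynomial.aeval (R := ℝ) ψ) P2 = (g2 : C(X, ℝ)) := hP2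
        have hx1 : P1.eval (Real.exp (-θ)) = (g1 : C(X, ℝ)) x := by
          rw [← hP1', Polynomial.aeval_continuousMap_apply]; rfl
        have hx2 : P2.eval (Real.exp (-θ)) = (g2 : C(X, ℝ)) x := by
          rw [← hP2', Polynomial.aeval_continuousMap_apply]; rfl
        have d1 : |(g1 : C(X, ℝ)) x - (M θ).re| ≤ ‖(g1 : C(X, ℝ)) - f1‖ := by
          have := ((g1 : C(X, ℝ)) - f1).norm_coe_le_norm x
          simpa [f1, Real.norm_eq_abs] using this
        have d2 : |(g2 : C(X, ℝ)) x - (M θ).im| ≤ ‖(g2 : C(X, ℝ)) - f2‖ := by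
          have := ((g2 : C(X, ℝ)) - f2).norm_coe_le_norm x
          simpa [f2, Real.norm_eq_abs] using this
        have e7 : (starRingEnd ℂ) (M θ) - G θ =
            (((M θ).re - P1.eval (Real.exp (-θ)) : ℝ) : ℂ)
            - Complex.I * (((M θ).im - P2.eval (Real.exp (-θ)) : ℝ) : ℂ) := by
          rw [← Complex.re_add_im (M θ)]
          simp only [G, map_add, map_mul, Complex.conj_ofReal, Complex.conj_I]
          push_cast
          ring_nf
          simp [Complex.re_add_im]
          ring
        rw [e7]
        refine (norm_sub_le _ _).trans ?_
        have b1 : ‖(((M θ).re - P1.eval (Real.exp (-θ)) : ℝ) : ℂ)‖ ≤ ε := by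
          rw [Complex.norm_real, Real.norm_eq_abs, abs_sub_comm, hx1]
          exact d1.trans hg1.le
        have b2 : ‖Complex.I * (((M θ).im - P2.eval (Real.exp (-θ)) : ℝ) : ℂ)‖ ≤ ε := by
          rw [norm_mul, Complex.norm_I, one_mul, Complex.norm_real, Real.norm_eq_abs,
            abs_sub_comm, hx2]
          exact d2.trans hg2.le
        linarith
      -- the estimate
      have hsplit : ((J : ℝ) : ℂ) = ∫ θ in (0:ℝ)..τ, M θ * ((starRingEnd ℂ) (M θ) - G θ) := by
        have hconjint : IntervalIntegrable (fun θ => M θ * (starRingEnd ℂ) (M θ)) volume 0 τ := by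
          apply ContinuousOn.intervalIntegrable
          rw [hIcc]
          exact hM.mul (Complex.continuous_conj.comp_continuousOn hM)
        simp_rw [mul_sub]
        rw [intervalIntegral.integral_sub hconjint (hint _ hGcont), hG0, sub_zero, hJc]
      have hbnd : ‖((J : ℝ) : ℂ)‖ ≤ C * (2 * ε) * |τ - 0| := by
        rw [hsplit]
        apply intervalIntegral.norm_integral_le_of_norm_le_const
        intro θ hθ
        have hθ' : θ ∈ Set.Icc (0:ℝ) τ := by
          rw [Set.uIoc_of_le hτ.le] at hθ; exact ⟨hθ.1.le, hθ.2⟩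
        rw [norm_mul]
        exact mul_le_mul (hC θ hθ') (happrox θ hθ') (norm_nonneg _) hC0
      rw [Complex.norm_real, Real.norm_eq_abs, _root_.abs_of_nonneg hJnonneg, sub_zero,
        _root_.abs_of_pos hτ] at hbnd
      calc J ≤ C * (2 * ε) * τ := hbnd
        _ = 2 * C * τ * ε := by ring
    by_contra hne
    have hJpos : 0 < J := lt_of_le_of_ne hJnonneg (Ne.symm hne)
    have hcτ : 0 < 2 * C * τ + 1 := by positivity
    have h1 := hJle (J / (2 * (2 * C * τ + 1))) (by positivity)
    have e8 : 2 * C * τ * (J / (2 * (2 * C * τ + 1))) =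
        (2 * C * τ * J) / (2 * (2 * C * τ + 1)) := by ring
    rw [e8] at h1
    have h2 := (le_div_iff₀ (by positivity : (0:ℝ) < 2 * (2 * C * τ + 1))).mp h1
    nlinarith [mul_nonneg (mul_nonneg hC0 hτ.le) hJnonneg]
  -- conclude M = 0 on Icc
  have hMzero : ∀ θ ∈ Set.Icc (0:ℝ) τ, M θ = 0 := by
    intro θ0 hθ0
    by_contra hne
    have hpos : 0 < ∫ θ in (0:ℝ)..τ, Complex.normSq (M θ) := by
      apply intervalIntegral.integral_pos hτ
      · exact Complex.continuous_normSq.comp_continuousOn hM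
      · exact fun x _ => Complex.normSq_nonneg _
      · exact ⟨θ0, hθ0, Complex.normSq_pos.mpr hne⟩
    linarith [hJ ▸ hpos]
  exact ⟨hMzero, hp, hq⟩
end

section
/- Suppose g is a complex polynomial, c ∈ ℂ, a ∈ ℂ, τ > 0, and M : [0,τ] → ℂ is continuous, not identically zero, and λ − a − ∫₀^τ M(θ)e^{−λθ} dθ = g(λ)e^{cλ} for all λ ∈ ℂ. Then this leads to a contradiction; i.e., no such g and c exist. -/
open Filter Polynomial

lemma L1aux : ∀ (n : ℕ) (q : Polynomial ℂ), q.natDegree ≤ n →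
    Tendsto (fun t : ℝ => q.eval (t : ℂ)) atTop (nhds 0) → q = 0 := by
  intro n
  induction n with
  | zero =>
    intro q hq ht
    rw [Polynomial.eq_C_of_natDegree_le_zero hq] at ht ⊢
    simp only [Polynomial.eval_C] at ht
    rw [tendsto_nhds_unique tendsto_const_nhds ht, map_zero]
  | succ n ih =>
    intro q hq ht
    have hinv : Tendsto (fun t : ℝ => ((t : ℂ))⁻¹) atTop (nhds 0) := by
      have : Tendsto (fun t : ℝ => ((t⁻¹ : ℝ) : ℂ)) atTop (nhds ((0:ℝ):ℂ)) :=
        (Complex.continuous_ofReal.tendsto _).comp tendsto_inv_atTop_zero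
      simpa using this
    have h2 : Tendsto (fun t : ℝ => (q.eval (t:ℂ) - (Polynomial.C (q.coeff 0)).eval (t:ℂ)) * ((t:ℂ))⁻¹)
        atTop (nhds 0) := by
      simpa using ((ht.sub_const _).mul hinv)
    have heq : ∀ᶠ t : ℝ in atTop,
        (q.eval (t:ℂ) - (Polynomial.C (q.coeff 0)).eval (t:ℂ)) * ((t:ℂ))⁻¹
          = (q.divX).eval (t:ℂ) := by
      filter_upwards [eventually_ge_atTop (1:ℝ)] with t ht1
      have htne : (t : ℂ) ≠ 0 := by
        simp only [ne_eq, Complex.ofReal_eq_zero]; linarith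
      have := congrArg (Polynomial.eval (t:ℂ)) (Polynomial.divX_mul_X_add q)
      simp only [Polynomial.eval_add, Polynomial.eval_mul, Polynomial.eval_X,
        Polynomial.eval_C] at this ⊢
      rw [← this]
      field_simp
      ring
    have h3 : Tendsto (fun t : ℝ => (q.divX).eval (t:ℂ)) atTop (nhds 0) :=
      Tendsto.congr' heq h2
    have h4 : q.divX = 0 := by
      refine ih q.divX ?_ h3
      have := Polynomial.natDegree_divX_eq_natDegree_tsub_one (p := q)
      omega
    have hqc : q = Polynomial.C (q.coeff 0) := by
      conv_lhs => rw [← Polynomial.divX_mul_X_add q]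
      rw [h4]; ring
    rw [hqc] at ht ⊢
    simp only [Polynomial.eval_C] at ht
    rw [tendsto_nhds_unique tendsto_const_nhds ht, map_zero]

lemma L2_s19 (q : Polynomial ℂ) : ∃ S : ℝ, 0 ≤ S ∧
    ∀ z : ℂ, ‖q.eval z‖ ≤ S * (max 1 ‖z‖) ^ q.natDegree := by
  refine ⟨∑ i ∈ Finset.range (q.natDegree + 1), ‖q.coeff i‖,
    Finset.sum_nonneg fun _ _ => norm_nonneg _, fun z => ?_⟩
  rw [Polynomial.eval_eq_sum_range, Finset.sum_mul]
  refine (norm_sum_le _ _).trans (Finset.sum_le_sum fun i hi => ?_)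
  rw [norm_mul, norm_pow]
  refine mul_le_mul_of_nonneg_left ?_ (norm_nonneg _)
  calc ‖z‖ ^ i ≤ (max 1 ‖z‖) ^ i := by
        gcongr; exact le_max_right _ _
    _ ≤ (max 1 ‖z‖) ^ q.natDegree := by
        have := Finset.mem_range.mp hi
        exact pow_le_pow_right₀ (le_max_left _ _) (by omega)

lemma L3 (q : Polynomial ℂ) (b K : ℝ) (hb : 0 < b) (z : ℝ → ℂ)
    (hz : ∀ t : ℝ, 1 ≤ t → ‖z t‖ ≤ t)
    (hlow : ∀ t : ℝ, 1 ≤ t → (t - K) * Real.exp (b * t) ≤ ‖q.eval (z t)‖) : False := by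
  obtain ⟨S, hS, hSb⟩ := L2_s19 q
  have hlo := (isLittleO_pow_exp_pos_mul_atTop q.natDegree hb).def
    (c := 1 / (S + 1)) (by positivity)
  rw [eventually_atTop] at hlo
  obtain ⟨T, hT⟩ := hlo
  set t := max (max 1 (K + 1)) T with htdef
  have ht1 : 1 ≤ t := le_trans (le_max_left _ _) (le_max_left _ _)
  have htK : K + 1 ≤ t := le_trans (le_max_right _ _) (le_max_left _ _)
  have htT : T ≤ t := le_max_right _ _
  have h1 : (t - K) * Real.exp (b * t) ≤ ‖q.eval (z t)‖ := hlow t ht1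
  have h2 : ‖q.eval (z t)‖ ≤ S * t ^ q.natDegree := by
    refine (hSb (z t)).trans ?_
    gcongr
    exact max_le ht1 (hz t ht1)
  have h3 := hT t htT
  simp only [norm_pow, Real.norm_eq_abs, Real.abs_exp, abs_of_nonneg (by linarith : (0:ℝ) ≤ t)] at h3
  have hexp : (0:ℝ) < Real.exp (b * t) := Real.exp_pos _
  have key : (t - K) * Real.exp (b * t) ≤ S * (1 / (S + 1)) * Real.exp (b * t) := by
    nlinarith [mul_le_mul_of_nonneg_left h3 hS]
  have hlt : S * (1 / (S + 1)) < 1 := by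
    rw [mul_one_div, div_lt_one (by linarith)]; linarith
  have h5 : 1 * Real.exp (b * t) ≤ (t - K) * Real.exp (b * t) := by
    apply mul_le_mul_of_nonneg_right (by linarith) hexp.le
  nlinarith [mul_lt_mul_of_pos_right hlt hexp]


open Filter Polynomial MeasureTheory intervalIntegral Set in
theorem stmt_19 (a : ℂ) (τ : ℝ) (hτ : 0 < τ) (M : ℝ → ℂ)
    (hM : ContinuousOn M (Set.Icc 0 τ))
    (hMne : ¬ ∀ θ ∈ Set.Icc (0 : ℝ) τ, M θ = 0)
    (g : Polynomial ℂ) (c : ℂ)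
    (h : ∀ lam : ℂ,
      lam - a - (∫ θ in (0 : ℝ)..τ, M θ * Complex.exp (-lam * θ))
        = g.eval lam * Complex.exp (c * lam)) :
    False := by
  obtain ⟨C, hC⟩ := IsCompact.exists_bound_of_continuousOn isCompact_Icc hM
  have hC0 : 0 ≤ C := le_trans (norm_nonneg (M 0)) (hC 0 ⟨le_refl 0, hτ.le⟩)
  set I : ℂ → ℂ := fun lam => ∫ θ in (0:ℝ)..τ, M θ * Complex.exp (-lam * θ) with hIdef
  have hInt : ∀ f : ℝ → ℂ, ContinuousOn f (Set.Icc 0 τ) →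
      IntervalIntegrable (fun θ : ℝ => M θ * f θ) volume 0 τ := by
    intro f hf
    apply ContinuousOn.intervalIntegrable
    rw [Set.uIcc_of_le hτ.le]
    exact hM.mul hf
  have hIb : ∀ lam : ℂ, 0 ≤ lam.re → ‖I lam‖ ≤ C * τ := by
    intro lam hre
    have := intervalIntegral.norm_integral_le_of_norm_le_const (a := 0) (b := τ) (C := C)
      (f := fun θ : ℝ => M θ * Complex.exp (-lam * θ)) ?_
    · rwa [sub_zero, abs_of_pos hτ] at this
    · intro x hx
      rw [Set.uIoc_of_le hτ.le] at hx
      rw [norm_mul, Complex.norm_exp]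
      have h1 : ((-lam) * (x:ℂ)).re = -(lam.re * x) := by simp [Complex.mul_re]
      rw [h1]
      have h2 : Real.exp (-(lam.re * x)) ≤ 1 := by
        rw [Real.exp_le_one_iff]
        have := hx.1.le
        nlinarith
      have h3 : ‖M x‖ ≤ C := hC x ⟨hx.1.le, hx.2⟩
      nlinarith [norm_nonneg (M x), Real.exp_pos (-(lam.re * x))]
  set K : ℝ := ‖a‖ + C * τ with hKdef
  have hKnn : 0 ≤ K := by positivity
  have hnorm : ∀ lam : ℂ, ‖g.eval lam‖ * Real.exp ((c * lam).re) = ‖lam - a - I lam‖ := by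
    intro lam
    rw [← Complex.norm_exp, ← norm_mul, ← h lam]
  have hlow : ∀ lam : ℂ, 0 ≤ lam.re →
      ‖lam‖ - K ≤ ‖g.eval lam‖ * Real.exp ((c * lam).re) := by
    intro lam hre
    rw [hnorm lam]
    have h1 : ‖lam‖ - ‖a + I lam‖ ≤ ‖lam - (a + I lam)‖ := norm_sub_norm_le _ _
    have h2 : ‖a + I lam‖ ≤ K := by
      rw [hKdef]
      exact (norm_add_le _ _).trans (by linarith [hIb lam hre])
    rw [sub_sub]
    linarith
  have hup : ∀ lam : ℂ, 0 ≤ lam.re →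
      ‖g.eval lam‖ * Real.exp ((c * lam).re) ≤ ‖lam‖ + K := by
    intro lam hre
    rw [hnorm lam, sub_sub]
    refine (norm_sub_le _ _).trans ?_
    have h2 : ‖a + I lam‖ ≤ K := by
      rw [hKdef]
      exact (norm_add_le _ _).trans (by linarith [hIb lam hre])
    linarith
  -- c.re ≥ 0
  have hcre : 0 ≤ c.re := by
    by_contra hlt
    push_neg at hlt
    refine L3 g (-c.re) K (by linarith) (fun t => (t:ℂ)) (fun t ht => by simp [abs_of_nonneg (by linarith : (0:ℝ) ≤ t)]) ?_
    intro t ht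
    have h0 : (0:ℝ) ≤ t := by linarith
    have h1 := hlow (t:ℂ) (by simp [h0])
    have h2 : ((c * (t:ℂ)).re) = c.re * t := by simp [Complex.mul_re]
    rw [h2] at h1
    have h3 : ‖(t:ℂ)‖ = t := by simp [abs_of_nonneg h0]
    rw [h3] at h1
    have h4 := mul_le_mul_of_nonneg_right h1 (Real.exp_pos (-(c.re * t))).le
    rw [mul_assoc, ← Real.exp_add] at h4
    simp only [add_neg_cancel, Real.exp_zero, mul_one] at h4
    calc (t - K) * Real.exp (-c.re * t) = (t - K) * Real.exp (-(c.re * t)) := by ring_nf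
      _ ≤ ‖g.eval (t:ℂ)‖ := h4
  -- c.im ≤ 0
  have hcim1 : c.im ≤ 0 := by
    by_contra hlt
    push_neg at hlt
    refine L3 g c.im K hlt (fun t => (t:ℂ) * Complex.I) (fun t ht => by
      simp [abs_of_nonneg (by linarith : (0:ℝ) ≤ t)]) ?_
    intro t ht
    have h0 : (0:ℝ) ≤ t := by linarith
    have h1 := hlow ((t:ℂ) * Complex.I) (by simp)
    have h2 : ((c * ((t:ℂ) * Complex.I)).re) = -(c.im * t) := by
      simp [Complex.mul_re]; try ring
    rw [h2] at h1
    have h3 : ‖(t:ℂ) * Complex.I‖ = t := by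
      simp [abs_of_nonneg h0]
    rw [h3] at h1
    have h4 := mul_le_mul_of_nonneg_right h1 (Real.exp_pos (c.im * t)).le
    rw [mul_assoc, ← Real.exp_add] at h4
    simp only [neg_add_cancel, Real.exp_zero, mul_one] at h4
    exact h4
  -- c.im ≥ 0
  have hcim2 : 0 ≤ c.im := by
    by_contra hlt
    push_neg at hlt
    refine L3 g (-c.im) K (by linarith) (fun t => -((t:ℂ) * Complex.I)) (fun t ht => by
      simp [abs_of_nonneg (by linarith : (0:ℝ) ≤ t)]) ?_
    intro t ht
    have h0 : (0:ℝ) ≤ t := by linarith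
    have h1 := hlow (-((t:ℂ) * Complex.I)) (by simp)
    have h2 : ((c * -((t:ℂ) * Complex.I)).re) = c.im * t := by
      simp [Complex.mul_re]; try ring
    rw [h2] at h1
    have h3 : ‖-((t:ℂ) * Complex.I)‖ = t := by
      simp [abs_of_nonneg h0]
    rw [h3] at h1
    have h4 := mul_le_mul_of_nonneg_right h1 (Real.exp_pos (-(c.im * t))).le
    rw [mul_assoc, ← Real.exp_add] at h4
    simp only [add_neg_cancel, Real.exp_zero, mul_one] at h4
    calc (t - K) * Real.exp (-c.im * t) = (t - K) * Real.exp (-(c.im * t)) := by ring_nf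
      _ ≤ ‖g.eval (-((t:ℂ) * Complex.I))‖ := h4
  -- c.re ≤ 0 : else g → 0 so g = 0, contradiction
  have hcre2 : c.re ≤ 0 := by
    by_contra hlt
    push_neg at hlt
    have hg0 : g = 0 := by
      refine L1aux g.natDegree g le_rfl ?_
      refine squeeze_zero_norm' (a := fun t : ℝ => (t + K) * Real.exp (-(c.re * t))) ?_ ?_
      · filter_upwards [eventually_ge_atTop (0:ℝ)] with t h0
        have h1 := hup (t:ℂ) (by simp [h0])
        have h2 : ((c * (t:ℂ)).re) = c.re * t := by simp [Complex.mul_re]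
        have h3 : ‖(t:ℂ)‖ = t := by simp [abs_of_nonneg h0]
        rw [h2, h3] at h1
        have h4 := mul_le_mul_of_nonneg_right h1 (Real.exp_pos (-(c.re * t))).le
        rw [mul_assoc, ← Real.exp_add] at h4
        simp only [add_neg_cancel, Real.exp_zero, mul_one] at h4
        exact h4
      · have h1 : (fun t : ℝ => t) =o[atTop] fun t => Real.exp (c.re * t) := by
          simpa using isLittleO_pow_exp_pos_mul_atTop 1 hlt
        have h2 : (fun t : ℝ => t + K) =O[atTop] fun t : ℝ => t := by
          rw [Asymptotics.isBigO_iff]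
          refine ⟨2, ?_⟩
          filter_upwards [eventually_ge_atTop (max 1 |K|)] with t ht
          have ht1 : 1 ≤ t := le_trans (le_max_left _ _) ht
          have htK : |K| ≤ t := le_trans (le_max_right _ _) ht
          rw [Real.norm_eq_abs, Real.norm_eq_abs, abs_of_nonneg (by linarith : (0:ℝ) ≤ t)]
          have := abs_le.mp (le_refl |K|)
          calc |t + K| ≤ |t| + |K| := abs_add_le _ _
            _ ≤ t + t := by rw [abs_of_nonneg (by linarith : (0:ℝ) ≤ t)]; linarith
            _ = 2 * t := by ring
        have h3 := (h2.trans_isLittleO h1).tendsto_div_nhds_zero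
        refine h3.congr (fun t => ?_)
        rw [div_eq_mul_inv, ← Real.exp_neg, neg_mul_eq_neg_mul]
    -- g = 0 gives contradiction
    set t0 : ℝ := C * τ + ‖a‖ + 1 with ht0def
    have ht0 : (0:ℝ) ≤ t0 := by positivity
    have h1 := h (t0 : ℂ)
    rw [hg0] at h1
    simp only [Polynomial.eval_zero, zero_mul] at h1
    have h2 : (t0:ℂ) - a = I (t0:ℂ) := sub_eq_zero.mp h1
    have h3 := hIb (t0:ℂ) (by simp [ht0])
    rw [← h2] at h3
    have h4 : ‖(t0:ℂ)‖ - ‖a‖ ≤ ‖(t0:ℂ) - a‖ := norm_sub_norm_le _ _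
    have h5 : ‖(t0:ℂ)‖ = t0 := by simp [abs_of_nonneg ht0]
    rw [h5] at h4
    rw [ht0def] at h4
    linarith
  have hc0 : c = 0 := Complex.ext (le_antisymm hcre2 hcre) (le_antisymm hcim1 hcim2)
  -- now c = 0
  subst hc0
  simp only [zero_mul, Complex.exp_zero, mul_one] at h
  set q : Polynomial ℂ := Polynomial.X - Polynomial.C a - g with hqdef
  have hq : ∀ lam : ℂ, I lam = q.eval lam := by
    intro lam
    rw [hqdef]
    simp only [eval_sub, eval_X, eval_C]
    linear_combination -(h lam)
  have hq0 : q = 0 := by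
    refine L1aux q.natDegree q le_rfl ?_
    refine squeeze_zero_norm' (a := fun t : ℝ => C / t) ?_
      (Filter.Tendsto.div_atTop tendsto_const_nhds tendsto_id)
    filter_upwards [eventually_ge_atTop (1:ℝ)] with t ht1
    have ht0 : (0:ℝ) < t := by linarith
    rw [← hq (t:ℂ)]
    have hbd := intervalIntegral.norm_integral_le_abs_of_norm_le
      (f := fun θ : ℝ => M θ * Complex.exp (-(t:ℂ) * θ)) (a := 0) (b := τ) (μ := volume)
      (g := fun θ : ℝ => C * Real.exp (-(t * θ))) ?_ ?_
    · have hval : ∫ θ in (0:ℝ)..τ, C * Real.exp (-(t * θ))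
          = C * ((1 - Real.exp (-(t * τ))) / t) := by
        rw [intervalIntegral.integral_const_mul]
        congr 1
        have hcm := intervalIntegral.integral_comp_mul_left (f := Real.exp) (a := (0:ℝ))
          (b := τ) (c := -t) (by intro hh; nlinarith [hh] : (-t : ℝ) ≠ 0)
        simp only [neg_mul] at hcm ⊢
        rw [hcm, integral_exp]
        simp only [mul_zero, neg_zero, Real.exp_zero, smul_eq_mul]
        field_simp
        ring
      rw [hval] at hbd
      refine hbd.trans ?_
      have he1 : Real.exp (-(t * τ)) ≤ 1 := by
        rw [Real.exp_le_one_iff]; nlinarith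
      have he0 : 0 < Real.exp (-(t * τ)) := Real.exp_pos _
      rw [abs_of_nonneg (mul_nonneg hC0 (div_nonneg (by linarith) ht0.le))]
      calc C * ((1 - Real.exp (-(t * τ))) / t) ≤ C * (1 / t) := by
            gcongr
            linarith
        _ = C / t := by ring
    · filter_upwards [MeasureTheory.ae_restrict_mem measurableSet_uIoc] with θ hθ
      rw [Set.uIoc_of_le hτ.le] at hθ
      rw [norm_mul, Complex.norm_exp]
      have h1 : ((-(t:ℂ)) * (θ:ℂ)).re = -(t * θ) := by simp [Complex.mul_re]
      rw [h1]
      exact mul_le_mul_of_nonneg_right (hC θ ⟨hθ.1.le, hθ.2⟩) (Real.exp_pos _).le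
    · apply ContinuousOn.intervalIntegrable
      apply Continuous.continuousOn
      fun_prop
  have hIzero : ∀ lam : ℂ, I lam = 0 := by
    intro lam
    rw [hq lam, hq0, Polynomial.eval_zero]
  have hmom : ∀ n : ℕ, ∫ θ in (0:ℝ)..τ, M θ * (((Real.exp (-θ) : ℝ)) : ℂ)^n = 0 := by
    intro n
    have h0 := hIzero ((n : ℕ) : ℂ)
    rw [hIdef] at h0
    rw [← h0]
    apply intervalIntegral.integral_congr
    intro θ _
    simp only
    congr 1
    rw [Complex.ofReal_exp, ← Complex.exp_nat_mul]
    congr 1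
    push_cast
    ring
  -- Stone-Weierstrass
  set E : C(Set.Icc (0:ℝ) τ, ℝ) :=
    ⟨fun x => Real.exp (-(x:ℝ)), by fun_prop⟩ with hEdef
  have hEA : E ∈ Algebra.adjoin ℝ ({E} : Set C(Set.Icc (0:ℝ) τ, ℝ)) :=
    Algebra.subset_adjoin rfl
  have hsep : (Algebra.adjoin ℝ ({E} : Set C(Set.Icc (0:ℝ) τ, ℝ))).SeparatesPoints := by
    intro x y hxy
    refine ⟨E, ⟨E, hEA, rfl⟩, ?_⟩
    intro hcon
    apply hxy
    have : -(x:ℝ) = -(y:ℝ) := Real.exp_injective hcon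
    exact Subtype.ext (by linarith)
  have hdense := ContinuousMap.subalgebra_topologicalClosure_eq_top_of_separatesPoints _ hsep
  have key : ∀ f : C(Set.Icc (0:ℝ) τ, ℝ),
      (∫ θ in (0:ℝ)..τ, M θ * ((Set.IccExtend hτ.le f θ : ℝ) : ℂ)) = 0 := by
    have hcontExt : ∀ f : C(Set.Icc (0:ℝ) τ, ℝ),
        ContinuousOn (fun θ : ℝ => ((Set.IccExtend hτ.le f θ : ℝ) : ℂ)) (Set.Icc 0 τ) := by
      intro f
      apply Continuous.continuousOn
      exact Complex.continuous_ofReal.comp (f.continuous.comp continuous_projIcc)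
    have hvan : ∀ p : Polynomial ℝ,
        (∫ θ in (0:ℝ)..τ, M θ * ((Set.IccExtend hτ.le ((Polynomial.aeval E) p) θ : ℝ) : ℂ)) = 0 := by
      intro p
      have heq : Set.EqOn
          (fun θ : ℝ => M θ * ((Set.IccExtend hτ.le ((Polynomial.aeval E) p) θ : ℝ) : ℂ))
          (fun θ : ℝ => ∑ i ∈ Finset.range (p.natDegree + 1),
            ((p.coeff i : ℝ) : ℂ) * (M θ * (((Real.exp (-θ) : ℝ)) : ℂ)^i))
          (Set.uIcc 0 τ) := by
        rw [Set.uIcc_of_le hτ.le]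
        intro θ hθ
        simp only
        rw [Set.IccExtend_of_mem hτ.le _ hθ, Polynomial.aeval_continuousMap_apply]
        have hEθ : E ⟨θ, hθ⟩ = Real.exp (-θ) := rfl
        rw [hEθ, Polynomial.eval_eq_sum_range]
        push_cast
        rw [Finset.mul_sum]
        exact Finset.sum_congr rfl fun i _ => by ring
      rw [intervalIntegral.integral_congr heq]
      rw [intervalIntegral.integral_finset_sum]
      · refine Finset.sum_eq_zero fun i _ => ?_
        rw [intervalIntegral.integral_const_mul, hmom i, mul_zero]
      · intro i _
        apply IntervalIntegrable.const_mul
        apply hInt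
        apply Continuous.continuousOn
        fun_prop
    intro f
    by_contra hne
    set ε := ‖(∫ θ in (0:ℝ)..τ, M θ * ((Set.IccExtend hτ.le f θ : ℝ) : ℂ))‖ with hεdef
    have hε : 0 < ε := by
      rw [hεdef]
      exact norm_pos_iff.mpr hne
    have hδpos : 0 < ε / (2 * (C * τ + 1)) := by positivity
    have hfA : f ∈ closure ((Algebra.adjoin ℝ ({E} : Set C(Set.Icc (0:ℝ) τ, ℝ))) :
        Set C(Set.Icc (0:ℝ) τ, ℝ)) := by
      rw [← Subalgebra.topologicalClosure_coe, hdense]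
      trivial
    obtain ⟨b, hbA, hbd⟩ := Metric.mem_closure_iff.mp hfA _ hδpos
    rw [SetLike.mem_coe, Algebra.adjoin_singleton_eq_range_aeval] at hbA
    obtain ⟨p, hp⟩ := hbA
    have hzero : (∫ θ in (0:ℝ)..τ, M θ * ((Set.IccExtend hτ.le b θ : ℝ) : ℂ)) = 0 := by
      rw [← hp]; exact hvan p
    have hdiff : (∫ θ in (0:ℝ)..τ, M θ * ((Set.IccExtend hτ.le f θ : ℝ) : ℂ))
        = ∫ θ in (0:ℝ)..τ, M θ * (((Set.IccExtend hτ.le f θ - Set.IccExtend hτ.le b θ : ℝ)) : ℂ) := by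
      rw [← sub_zero (∫ θ in (0:ℝ)..τ, M θ * ((Set.IccExtend hτ.le f θ : ℝ) : ℂ)), ← hzero,
        ← intervalIntegral.integral_sub (hInt _ (hcontExt f)) (hInt _ (hcontExt b))]
      apply intervalIntegral.integral_congr
      intro θ _
      simp only
      push_cast
      ring
    have hbound : ε ≤ C * (ε / (2 * (C * τ + 1))) * |τ - 0| := by
      have hrw : ε = ‖∫ θ in (0:ℝ)..τ,
          M θ * (((Set.IccExtend hτ.le f θ - Set.IccExtend hτ.le b θ : ℝ)) : ℂ)‖ := by
        rw [hεdef, hdiff]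
      conv_lhs => rw [hrw]
      apply intervalIntegral.norm_integral_le_of_norm_le_const
      intro x hx
      rw [Set.uIoc_of_le hτ.le] at hx
      have hx' : x ∈ Set.Icc 0 τ := ⟨hx.1.le, hx.2⟩
      rw [norm_mul, Complex.norm_real]
      have h1 : ‖Set.IccExtend hτ.le f x - Set.IccExtend hτ.le b x‖
          ≤ ε / (2 * (C * τ + 1)) := by
        rw [Set.IccExtend_of_mem hτ.le _ hx', Set.IccExtend_of_mem hτ.le _ hx']
        calc ‖f ⟨x, hx'⟩ - b ⟨x, hx'⟩‖ = dist (f ⟨x, hx'⟩) (b ⟨x, hx'⟩) := by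
              rw [dist_eq_norm]
          _ ≤ dist f b := ContinuousMap.dist_apply_le_dist _
          _ ≤ ε / (2 * (C * τ + 1)) := hbd.le
      exact mul_le_mul (hC x hx') h1 (norm_nonneg _) hC0
    rw [sub_zero, abs_of_pos hτ] at hbound
    have hfrac : C * (ε / (2 * (C * τ + 1))) * τ < ε := by
      have h2 : C * (ε / (2 * (C * τ + 1))) * τ = ε * ((C * τ) / (2 * (C * τ + 1))) := by
        ring
      have h3 : (C * τ) / (2 * (C * τ + 1)) < 1 := by
        rw [div_lt_one (by positivity)]
        nlinarith
      rw [h2]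
      exact mul_lt_of_lt_one_right hε h3
    linarith
  -- apply to real and imaginary parts of M
  have hMrest : Continuous fun x : Set.Icc (0:ℝ) τ => M (x : ℝ) := hM.restrict
  have hre := key ⟨fun x => (M (x:ℝ)).re, Complex.continuous_re.comp hMrest⟩
  have him := key ⟨fun x => (M (x:ℝ)).im, Complex.continuous_im.comp hMrest⟩
  have hre' : (∫ θ in (0:ℝ)..τ, M θ * (((M θ).re : ℝ) : ℂ)) = 0 := by
    rw [← hre]
    apply intervalIntegral.integral_congr
    rw [Set.uIcc_of_le hτ.le]
    intro θ hθ
    simp only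
    rw [Set.IccExtend_of_mem hτ.le _ hθ]
    rfl
  have him' : (∫ θ in (0:ℝ)..τ, M θ * (((M θ).im : ℝ) : ℂ)) = 0 := by
    rw [← him]
    apply intervalIntegral.integral_congr
    rw [Set.uIcc_of_le hτ.le]
    intro θ hθ
    simp only
    rw [Set.IccExtend_of_mem hτ.le _ hθ]
    rfl
  have hns : (∫ θ in (0:ℝ)..τ, ((Complex.normSq (M θ) : ℝ) : ℂ)) = 0 := by
    have hfun : ∀ θ : ℝ, ((Complex.normSq (M θ) : ℝ) : ℂ)
        = M θ * (((M θ).re : ℝ) : ℂ) - Complex.I * (M θ * (((M θ).im : ℝ) : ℂ)) := by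
      intro θ
      rw [← Complex.mul_conj]
      apply Complex.ext <;>
        simp [Complex.mul_re, Complex.mul_im] <;> ring
    have hint1 := hInt (fun θ => (((M θ).re : ℝ) : ℂ))
      (Complex.continuous_ofReal.comp_continuousOn (Complex.continuous_re.comp_continuousOn hM))
    have hint2 := hInt (fun θ => (((M θ).im : ℝ) : ℂ))
      (Complex.continuous_ofReal.comp_continuousOn (Complex.continuous_im.comp_continuousOn hM))
    calc (∫ θ in (0:ℝ)..τ, ((Complex.normSq (M θ) : ℝ) : ℂ))
        = ∫ θ in (0:ℝ)..τ, (M θ * (((M θ).re : ℝ) : ℂ)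
            - Complex.I * (M θ * (((M θ).im : ℝ) : ℂ))) := by
          apply intervalIntegral.integral_congr
          intro θ _
          exact hfun θ
      _ = (∫ θ in (0:ℝ)..τ, M θ * (((M θ).re : ℝ) : ℂ))
            - ∫ θ in (0:ℝ)..τ, Complex.I * (M θ * (((M θ).im : ℝ) : ℂ)) :=
          intervalIntegral.integral_sub hint1 (hint2.const_mul _)
      _ = 0 - Complex.I * ∫ θ in (0:ℝ)..τ, M θ * (((M θ).im : ℝ) : ℂ) := by
          rw [hre', intervalIntegral.integral_const_mul]
      _ = 0 := by rw [him']; ring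
  rw [intervalIntegral.integral_ofReal, Complex.ofReal_eq_zero] at hns
  have hnsInt : IntervalIntegrable (fun θ => Complex.normSq (M θ)) volume 0 τ := by
    apply ContinuousOn.intervalIntegrable
    rw [Set.uIcc_of_le hτ.le]
    exact Complex.continuous_normSq.comp_continuousOn hM
  have hae := (intervalIntegral.integral_eq_zero_iff_of_nonneg_ae ?_ hnsInt).mp hns
  swap
  · filter_upwards [] with θ
    exact Complex.normSq_nonneg _
  · rw [Set.Ioc_eq_empty (not_lt.mpr hτ.le), Set.union_empty,
      MeasureTheory.Measure.restrict_congr_set MeasureTheory.Ioc_ae_eq_Icc] at hae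
    have heqOn := MeasureTheory.Measure.eqOn_of_ae_eq hae
      (Complex.continuous_normSq.comp_continuousOn hM) continuousOn_const ?_
    · apply hMne
      intro θ hθ
      have := heqOn hθ
      simp only [Pi.zero_apply] at this
      exact Complex.normSq_eq_zero.mp this
    · rw [interior_Icc, closure_Ioo hτ.ne]
end
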